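/- arXiv:0710.0960 — 11 statements merged into one kernel-verified Lean document; each statement's English description precedes it below -/
import Mathlib

section
/- Let W = ∑_{n≥0} w_n x^n ∈ (ℚ[t,t⁻¹])[[x]]. Then W satisfies the algebraic equation t(1+tx) − tW + 2tx²W² + x³W⁴ = 0. -/
open LaurentPolynomial PowerSeries

/-- If `w : ℕ → ℚ[T;T⁻¹]` is the sequence of Laurent polynomials defined
by `w 0 = 1` and `w (n+1) (t) = t * ∑_{k=0}^{n} w k (t⁻¹) * w (n-k) (t⁻¹)`, then the
generating series `W = ∑ w n * x^n ∈ (ℚ[t,t⁻¹])[[x]]` satisfies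
`t(1+tx) − tW + 2tx²W² + x³W⁴ = 0`. -/
theorem stmt0 (w : ℕ → ℚ[T;T⁻¹])
    (hw0 : w 0 = 1)
    (hw : ∀ n : ℕ, w (n + 1) =
      T 1 * ∑ k ∈ Finset.range (n + 1), invert (w k) * invert (w (n - k)))
    (W : (ℚ[T;T⁻¹])⟦X⟧) (hW : W = PowerSeries.mk fun n => w n) :
    PowerSeries.C (R := ℚ[T;T⁻¹]) (T 1) * (1 + PowerSeries.C (R := ℚ[T;T⁻¹]) (T 1) * PowerSeries.X)
      - PowerSeries.C (R := ℚ[T;T⁻¹]) (T 1) * W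
      + 2 * PowerSeries.C (R := ℚ[T;T⁻¹]) (T 1) * PowerSeries.X ^ 2 * W ^ 2
      + PowerSeries.X ^ 3 * W ^ 4 = 0 := by
  set Ca := PowerSeries.C (R := ℚ[T;T⁻¹]) (T 1) with hCa
  set Cb := PowerSeries.C (R := ℚ[T;T⁻¹]) (T (-1)) with hCb
  set Wb : (ℚ[T;T⁻¹])⟦X⟧ := PowerSeries.mk fun n => invert (w n) with hWb
  have hinv : ∀ x : ℚ[T;T⁻¹], invert (invert x) = x := involutive_invert
  have habC : Ca * Cb = 1 := by
    rw [hCa, hCb, ← map_mul, ← T_add]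
    norm_num
  have hA : W = 1 + Ca * (PowerSeries.X * Wb ^ 2) := by
    apply PowerSeries.ext
    intro n
    cases n with
    | zero => simp [hW, hw0]
    | succ n =>
      rw [hW, coeff_mk, hw n, map_add, PowerSeries.coeff_one, hCa, PowerSeries.coeff_C_mul,
        PowerSeries.coeff_succ_X_mul, sq, PowerSeries.coeff_mul,
        Finset.Nat.sum_antidiagonal_eq_sum_range_succ_mk]
      simp [hWb]
  have hB : Wb = 1 + Cb * (PowerSeries.X * W ^ 2) := by
    apply PowerSeries.ext
    intro n
    cases n with
    | zero => simp [hWb, hW, hw0]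
    | succ n =>
      rw [hWb, coeff_mk, hw n, map_mul, invert_T, map_sum, map_add, PowerSeries.coeff_one,
        hCb, PowerSeries.coeff_C_mul, PowerSeries.coeff_succ_X_mul, sq, PowerSeries.coeff_mul,
        Finset.Nat.sum_antidiagonal_eq_sum_range_succ_mk]
      simp [hW, map_mul, hinv]
  rw [hB] at hA
  linear_combination (-(Ca)) * hA
    - (2*Ca*PowerSeries.X^2*W^2 + PowerSeries.X^3*W^4*(1+Ca*Cb)) * habC
end

section
/- For every n ∈ ℕ and every j ∈ ℤ, the coefficients of the Laurent polynomial w_n satisfy (n+2+3j)·(w_n, t^{−j}) = (n+2−3j)·(w_n, t^{j}). -/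
open LaurentPolynomial PowerSeries

noncomputable section Stmt2Aux

lemma LP.add_apply (f g : ℚ[T;T⁻¹]) (j : ℤ) : (f + g).coeff j = f.coeff j + g.coeff j := rfl
lemma LP.sub_apply (f g : ℚ[T;T⁻¹]) (j : ℤ) : (f - g).coeff j = f.coeff j - g.coeff j := rfl
lemma LP.neg_apply (f : ℚ[T;T⁻¹]) (j : ℤ) : (-f).coeff j = -(f.coeff j) := rfl
lemma LP.smul_apply (c : ℚ) (f : ℚ[T;T⁻¹]) (j : ℤ) : (c • f).coeff j = c * f.coeff j := rfl
lemma LP.zero_apply (j : ℤ) : (0 : ℚ[T;T⁻¹]).coeff j = 0 := rfl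
lemma LP.single_apply (a : ℤ) (x : ℚ) (j : ℤ) :
    (AddMonoidAlgebra.single a x : ℚ[T;T⁻¹]).coeff j = if a = j then x else 0 :=
  Finsupp.single_apply
lemma LP.T_eq (n : ℤ) : (T n : ℚ[T;T⁻¹]) = AddMonoidAlgebra.single n 1 := rfl
lemma LP.one_eq : (1 : ℚ[T;T⁻¹]) = AddMonoidAlgebra.single 0 1 := rfl

/-- The operator `t·d/dt` on Laurent polynomials over `ℚ`. -/
def th (f : ℚ[T;T⁻¹]) : ℚ[T;T⁻¹] :=
  AddMonoidAlgebra.ofCoeff (Finsupp.onFinset f.coeff.support (fun j => (j : ℚ) * f.coeff j)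
    (fun j h => by
      simp only [Finsupp.mem_support_iff]
      intro hf
      exact h (by show (j : ℚ) * f.coeff j = 0; rw [hf, mul_zero])))

@[simp] lemma th_apply (f : ℚ[T;T⁻¹]) (j : ℤ) : (th f).coeff j = (j : ℚ) * f.coeff j := rfl

lemma th_zero : th 0 = 0 := by
  ext j; rw [th_apply, LP.zero_apply, mul_zero]

lemma th_add (f g : ℚ[T;T⁻¹]) : th (f + g) = th f + th g := by
  ext j
  rw [th_apply, LP.add_apply, LP.add_apply, th_apply, th_apply, mul_add]

lemma th_single (a : ℤ) (x : ℚ) :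
    th (AddMonoidAlgebra.single a x) = AddMonoidAlgebra.single a ((a : ℚ) * x) := by
  ext j
  rw [th_apply, LP.single_apply, LP.single_apply]
  split_ifs with h
  · subst h; rfl
  · rw [mul_zero]

lemma th_mul (f g : ℚ[T;T⁻¹]) : th (f * g) = th f * g + f * th g := by
  induction f using AddMonoidAlgebra.induction_linear with
  | zero => simp [th_zero]
  | add f1 f2 h1 h2 => rw [add_mul, th_add, h1, h2, th_add, add_mul]; ring
  | single a x =>
    induction g using AddMonoidAlgebra.induction_linear with
    | zero => simp [th_zero]
    | add g1 g2 h1 h2 => rw [mul_add, th_add, h1, h2, th_add, mul_add]; ring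
    | single b y =>
      rw [AddMonoidAlgebra.single_mul_single, th_single, th_single, th_single,
        AddMonoidAlgebra.single_mul_single, AddMonoidAlgebra.single_mul_single,
        ← AddMonoidAlgebra.single_add]
      congr 1
      push_cast
      ring

lemma th_T_one : th (T 1 : ℚ[T;T⁻¹]) = T 1 := by
  rw [LP.T_eq, th_single]
  norm_num

lemma th_T_negone : th (T (-1) : ℚ[T;T⁻¹]) = -(T (-1)) := by
  rw [LP.T_eq, th_single]
  norm_num

lemma th_one : th (1 : ℚ[T;T⁻¹]) = 0 := by
  rw [LP.one_eq, th_single]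
  norm_num

/-- `th` as an additive monoid hom. -/
def thHom : ℚ[T;T⁻¹] →+ ℚ[T;T⁻¹] := AddMonoidHom.mk' th th_add

lemma th_sum {ι : Type*} (s : Finset ι) (f : ι → ℚ[T;T⁻¹]) :
    th (∑ i ∈ s, f i) = ∑ i ∈ s, th (f i) :=
  map_sum thHom f s

/-- Lift of `th` to power series, coefficientwise. -/
def TH (f : PowerSeries (ℚ[T;T⁻¹])) : PowerSeries (ℚ[T;T⁻¹]) :=
  PowerSeries.mk fun m => th (PowerSeries.coeff m f)

/-- The operator `x·d/dx` on power series. -/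
def DX (f : PowerSeries (ℚ[T;T⁻¹])) : PowerSeries (ℚ[T;T⁻¹]) :=
  PowerSeries.mk fun m => (m : ℚ) • (PowerSeries.coeff m f)

@[simp] lemma coeff_TH (m : ℕ) (f : PowerSeries (ℚ[T;T⁻¹])) :
    PowerSeries.coeff m (TH f) = th (PowerSeries.coeff m f) :=
  PowerSeries.coeff_mk _ _

@[simp] lemma coeff_DX (m : ℕ) (f : PowerSeries (ℚ[T;T⁻¹])) :
    PowerSeries.coeff m (DX f) = (m : ℚ) • (PowerSeries.coeff m f) :=
  PowerSeries.coeff_mk _ _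

lemma TH_add (f g : PowerSeries (ℚ[T;T⁻¹])) : TH (f + g) = TH f + TH g := by
  ext m; simp [th_add]

lemma DX_add (f g : PowerSeries (ℚ[T;T⁻¹])) : DX (f + g) = DX f + DX g := by
  ext m; simp

lemma TH_one : TH (1 : PowerSeries (ℚ[T;T⁻¹])) = 0 := by
  ext m
  simp only [coeff_TH, PowerSeries.coeff_one, map_zero]
  split_ifs with h
  · rw [th_one]
  · rw [th_zero]

lemma DX_one : DX (1 : PowerSeries (ℚ[T;T⁻¹])) = 0 := by
  ext m
  simp only [coeff_DX, PowerSeries.coeff_one, map_zero]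
  split_ifs with h
  · subst h; simp
  · simp

lemma TH_X : TH (X : PowerSeries (ℚ[T;T⁻¹])) = 0 := by
  ext m
  simp only [coeff_TH, PowerSeries.coeff_X, map_zero]
  split_ifs with h
  · rw [th_one]
  · rw [th_zero]

lemma DX_X : DX (X : PowerSeries (ℚ[T;T⁻¹])) = X := by
  ext m
  simp only [coeff_DX, PowerSeries.coeff_X]
  split_ifs with h
  · subst h; simp
  · simp

lemma TH_C (r : ℚ[T;T⁻¹]) : TH (PowerSeries.C r) = PowerSeries.C (th r) := by
  ext m
  simp only [coeff_TH, PowerSeries.coeff_C]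
  split_ifs with h
  · rfl
  · rw [th_zero]

lemma DX_C (r : ℚ[T;T⁻¹]) : DX (PowerSeries.C r) = 0 := by
  ext m
  simp only [coeff_DX, PowerSeries.coeff_C, map_zero]
  split_ifs with h
  · subst h; simp
  · simp

lemma TH_mul (f g : PowerSeries (ℚ[T;T⁻¹])) : TH (f * g) = TH f * g + f * TH g := by
  ext m
  simp only [coeff_TH, map_add, PowerSeries.coeff_mul, th_sum, th_mul,
    Finset.sum_add_distrib]

lemma DX_mul (f g : PowerSeries (ℚ[T;T⁻¹])) : DX (f * g) = DX f * g + f * DX g := by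
  ext m : 1
  simp only [coeff_DX, map_add, PowerSeries.coeff_mul, Finset.smul_sum]
  rw [← Finset.sum_add_distrib]
  apply Finset.sum_congr rfl
  intro p hp
  have hm : (m : ℚ) = (p.1 : ℚ) + (p.2 : ℚ) := by
    have := (Finset.HasAntidiagonal.mem_antidiagonal.mp hp)
    exact_mod_cast congrArg (Nat.cast : ℕ → ℚ) this.symm
  rw [hm, add_smul, smul_mul_assoc, mul_smul_comm]


/-- For the Laurent polynomials `w n` defined by `w 0 = 1` and
`w (n+1) (t) = t * ∑_{k=0}^{n} w k (t⁻¹) * w (n-k) (t⁻¹)`, the coefficients satisfy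
`(n+2+3j)·(w_n, t^{−j}) = (n+2−3j)·(w_n, t^{j})` for all `n ∈ ℕ`, `j ∈ ℤ`. -/
theorem stmt2 (w : ℕ → ℚ[T;T⁻¹])
    (hw0 : w 0 = 1)
    (hw : ∀ n : ℕ, w (n + 1) =
      T 1 * ∑ k ∈ Finset.range (n + 1), invert (w k) * invert (w (n - k)))
    (n : ℕ) (j : ℤ) :
    ((n : ℚ) + 2 + 3 * (j : ℚ)) * (w n).coeff (-j) = ((n : ℚ) + 2 - 3 * (j : ℚ)) * (w n).coeff j := by
  classical
  set Ws : PowerSeries (ℚ[T;T⁻¹]) := PowerSeries.mk w with hWs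
  set Vs : PowerSeries (ℚ[T;T⁻¹]) := PowerSeries.mk (fun k => invert (w k)) with hVs
  set s : PowerSeries (ℚ[T;T⁻¹]) := PowerSeries.C (T 1) with hs
  set s' : PowerSeries (ℚ[T;T⁻¹]) := PowerSeries.C (T (-1)) with hs'
  have hT : s * s' = 1 := by
    rw [hs, hs', ← map_mul, ← T_add]
    norm_num [T_zero]
  -- the two functional equations
  have hW1 : Ws = 1 + X * s * (Vs * Vs) := by
    ext m : 1
    rcases m with _ | m
    · simp [hWs, hw0, PowerSeries.coeff_zero_eq_constantCoeff, map_mul, map_add]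
    · rw [hWs, PowerSeries.coeff_mk, map_add, PowerSeries.coeff_one, mul_assoc,
        PowerSeries.coeff_succ_X_mul, hs, PowerSeries.coeff_C_mul, PowerSeries.coeff_mul,
        Finset.Nat.sum_antidiagonal_eq_sum_range_succ_mk]
      simp only [hVs, PowerSeries.coeff_mk]
      rw [hw m]
      simp
  have hW2 : Vs = 1 + X * s' * (Ws * Ws) := by
    ext m : 1
    rcases m with _ | m
    · simp [hVs, hw0, PowerSeries.coeff_zero_eq_constantCoeff, map_mul, map_add]
    · rw [hVs, PowerSeries.coeff_mk, map_add, PowerSeries.coeff_one, mul_assoc,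
        PowerSeries.coeff_succ_X_mul, hs', PowerSeries.coeff_C_mul, PowerSeries.coeff_mul,
        Finset.Nat.sum_antidiagonal_eq_sum_range_succ_mk]
      simp only [hWs, PowerSeries.coeff_mk]
      rw [hw m]
      rw [map_mul, invert_T, map_sum]
      simp [map_mul, LaurentPolynomial.involutive_invert _]
  -- constants
  have hDXs : DX s = 0 := by rw [hs, DX_C]
  have hDXs' : DX s' = 0 := by rw [hs', DX_C]
  have hTHs : TH s = s := by rw [hs, TH_C, th_T_one]
  have hTHs' : TH s' = -s' := by rw [hs', TH_C, th_T_negone, map_neg]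
  -- differentiated equations
  have hE1 : DX Ws = X * s * (Vs * Vs) + 2 * (X * s * Vs) * DX Vs := by
    conv_lhs => rw [hW1]
    simp only [DX_add, DX_mul, DX_one, DX_X, hDXs]
    ring
  have hE2 : DX Vs = X * s' * (Ws * Ws) + 2 * (X * s' * Ws) * DX Ws := by
    conv_lhs => rw [hW2]
    simp only [DX_add, DX_mul, DX_one, DX_X, hDXs']
    ring
  have hE3 : TH Ws = X * s * (Vs * Vs) + 2 * (X * s * Vs) * TH Vs := by
    conv_lhs => rw [hW1]
    simp only [TH_add, TH_mul, TH_one, TH_X, hTHs]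
    ring
  have hE4 : TH Vs = -(X * s' * (Ws * Ws)) + 2 * (X * s' * Ws) * TH Ws := by
    conv_lhs => rw [hW2]
    simp only [TH_add, TH_mul, TH_one, TH_X, hTHs']
    ring
  -- eliminate
  have h5 : DX Ws - (2*(X*s*Vs))*(2*(X*s'*Ws))*DX Ws
      = X*s*(Vs*Vs) + (2*(X*s*Vs))*(X*s'*(Ws*Ws)) := by
    linear_combination hE1 + (2*(X*s*Vs)) * hE2
  have h6 : DX Vs - (2*(X*s*Vs))*(2*(X*s'*Ws))*DX Vs
      = X*s'*(Ws*Ws) + (2*(X*s'*Ws))*(X*s*(Vs*Vs)) := by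
    linear_combination hE2 + (2*(X*s'*Ws)) * hE1
  have h7 : TH Ws - (2*(X*s*Vs))*(2*(X*s'*Ws))*TH Ws
      = X*s*(Vs*Vs) - (2*(X*s*Vs))*(X*s'*(Ws*Ws)) := by
    linear_combination hE3 + (2*(X*s*Vs)) * hE4
  have h8 : TH Vs - (2*(X*s*Vs))*(2*(X*s'*Ws))*TH Vs
      = -(X*s'*(Ws*Ws)) + (2*(X*s'*Ws))*(X*s*(Vs*Vs)) := by
    linear_combination hE4 + (2*(X*s'*Ws)) * hE3
  have hmain : DX Ws - DX Vs + 2*(Ws - Vs) - 3*(TH Ws + TH Vs)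
      = X * (X * ((4*(Ws*Vs)) * (DX Ws - DX Vs + 2*(Ws - Vs) - 3*(TH Ws + TH Vs)))) := by
    linear_combination h5 - h6 - 3*h7 - 3*h8 + 2*hW1 - 2*hW2
      + (4*X^2*Ws*Vs*(DX Ws - DX Vs + 2*(Ws-Vs) - 3*(TH Ws + TH Vs)))*hT
  -- all coefficients vanish
  have hzero : ∀ m, (PowerSeries.coeff m)
      (DX Ws - DX Vs + 2*(Ws - Vs) - 3*(TH Ws + TH Vs)) = 0 := by
    intro m
    induction m using Nat.strong_induction_on with
    | _ m ih =>
      rcases m with _ | _ | k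
      · rw [hmain]
        simp [PowerSeries.coeff_zero_eq_constantCoeff, map_mul]
      · rw [hmain, PowerSeries.coeff_succ_X_mul]
        simp [PowerSeries.coeff_zero_eq_constantCoeff, map_mul]
      · rw [hmain, PowerSeries.coeff_succ_X_mul, PowerSeries.coeff_succ_X_mul,
          PowerSeries.coeff_mul]
        apply Finset.sum_eq_zero
        intro p hp
        have hb : p.2 < k + 2 :=
          lt_of_le_of_lt (Finset.HasAntidiagonal.antidiagonal.snd_le hp) (by omega)
        rw [ih p.2 hb, mul_zero]
  -- extract the coefficient identity at level n
  have hn := hzero n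
  have e2 : (2 : PowerSeries (ℚ[T;T⁻¹]))*(Ws - Vs) = (Ws - Vs) + (Ws - Vs) := by ring
  have e3 : (3 : PowerSeries (ℚ[T;T⁻¹]))*(TH Ws + TH Vs)
      = (TH Ws + TH Vs) + (TH Ws + TH Vs) + (TH Ws + TH Vs) := by ring
  rw [e2, e3] at hn
  simp only [map_sub, map_add, coeff_DX, coeff_TH, hWs, hVs, PowerSeries.coeff_mk] at hn
  have hj := congrArg (fun f : ℚ[T;T⁻¹] => f.coeff j) hn
  simp only [LP.sub_apply, LP.add_apply, LP.smul_apply, th_apply, invert_apply,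
    LP.zero_apply] at hj
  linear_combination -hj

end Stmt2Aux
end

section
/- Let W = ∑_{n≥0} w_n x^n ∈ (ℚ[t,t⁻¹])[[x]], let W_x = ∑_{n≥1} n·w_n·x^{n−1} be the formal derivative of W with respect to x, and let W_t = ∑_{n≥0} w_n′ x^n where w_n′ ∈ ℚ[t,t⁻¹] is the formal derivative of the Laurent polynomial w_n with respect to t (so the coefficient of t^{j−1} in w_n′ is j·(w_n,t^j)). Then 2t(1−W) + x(2xW − t)·W_x + 3t(t+2xW)·W_t = 0 in (ℚ[t,t⁻¹])[[x]]. -/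
open LaurentPolynomial PowerSeries

noncomputable def lderiv (p : ℚ[T;T⁻¹]) : ℚ[T;T⁻¹] :=
  p.coeff.sum fun j a => LaurentPolynomial.C ((j : ℚ) * a) * T (j - 1)

lemma lderiv_C_mul_T (n : ℤ) (a : ℚ) :
    lderiv (LaurentPolynomial.C a * T n) = LaurentPolynomial.C ((n : ℚ) * a) * T (n - 1) := by
  rw [← single_eq_C_mul_T, lderiv]
  exact Finsupp.sum_single_index (by simp)

lemma lderiv_add (p q : ℚ[T;T⁻¹]) : lderiv (p + q) = lderiv p + lderiv q := by
  unfold lderiv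
  exact Finsupp.sum_add_index (by simp) (by intros; rw [mul_add, map_add, add_mul])

lemma lderiv_mul (p q : ℚ[T;T⁻¹]) : lderiv (p * q) = lderiv p * q + p * lderiv q := by
  induction p using LaurentPolynomial.induction_on' with
  | add p1 p2 h1 h2 => rw [add_mul, lderiv_add, h1, h2, lderiv_add]; ring
  | C_mul_T n a =>
    induction q using LaurentPolynomial.induction_on' with
    | add q1 q2 g1 g2 => rw [mul_add, lderiv_add, g1, g2, lderiv_add]; ring
    | C_mul_T m b =>
      have h : (LaurentPolynomial.C a * T n) * (LaurentPolynomial.C b * T m)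
          = LaurentPolynomial.C (a * b) * T (n + m) := by
        rw [map_mul, T_add]; ring
      rw [h, lderiv_C_mul_T, lderiv_C_mul_T, lderiv_C_mul_T]
      have h2 : ((n : ℚ) + m) * (a * b) = (n * a) * b + a * (m * b) := by ring
      push_cast
      rw [h2, map_add, add_mul]
      congr 1
      · rw [show n + m - 1 = (n - 1) + m from by ring, T_add, map_mul]; ring
      · rw [show n + m - 1 = n + (m - 1) from by ring, T_add, map_mul]; ring

lemma lderiv_zero : lderiv 0 = 0 := Finsupp.sum_zero_index

lemma lderiv_one : lderiv 1 = 0 := by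
  have : (1 : ℚ[T;T⁻¹]) = LaurentPolynomial.C 1 * T 0 := by simp
  rw [this, lderiv_C_mul_T]; simp

/-- `lderiv` bundled as an additive monoid hom. -/
noncomputable def lderivHom : ℚ[T;T⁻¹] →+ ℚ[T;T⁻¹] :=
  AddMonoidHom.mk' lderiv lderiv_add

/-- Coefficientwise `t`-derivative of a power series over Laurent polynomials. -/
noncomputable def DT (f : (ℚ[T;T⁻¹])⟦X⟧) : (ℚ[T;T⁻¹])⟦X⟧ :=
  PowerSeries.mk fun n => lderiv (PowerSeries.coeff n f)

lemma coeff_DT (f : (ℚ[T;T⁻¹])⟦X⟧) (n : ℕ) :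
    PowerSeries.coeff n (DT f) = lderiv (PowerSeries.coeff n f) := by simp [DT]

lemma DT_mul (f g : (ℚ[T;T⁻¹])⟦X⟧) : DT (f * g) = DT f * g + f * DT g := by
  ext n : 1
  rw [coeff_DT, map_add, coeff_mul, coeff_mul, coeff_mul,
    show lderiv = ⇑lderivHom from rfl, map_sum lderivHom _ _]
  have h : ∀ p ∈ Finset.HasAntidiagonal.antidiagonal n,
      lderivHom (PowerSeries.coeff p.1 f * PowerSeries.coeff p.2 g)
        = PowerSeries.coeff p.1 (DT f) * PowerSeries.coeff p.2 g
          + PowerSeries.coeff p.1 f * PowerSeries.coeff p.2 (DT g) := by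
    intro p _
    show lderiv _ = _
    rw [lderiv_mul, coeff_DT, coeff_DT]
  rw [Finset.sum_congr rfl h, Finset.sum_add_distrib]

lemma DT_one : DT 1 = 0 := by
  ext n
  rw [coeff_DT]
  rcases n with _ | n <;> simp [lderiv_one, lderiv_zero]

lemma DT_X : DT (PowerSeries.X : (ℚ[T;T⁻¹])⟦X⟧) = 0 := by
  ext n
  rw [coeff_DT, PowerSeries.coeff_X]
  split <;> simp [lderiv_one, lderiv_zero]

lemma DT_C (a : ℚ[T;T⁻¹]) : DT (PowerSeries.C a) = PowerSeries.C (lderiv a) := by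
  ext n
  rw [coeff_DT, PowerSeries.coeff_C, PowerSeries.coeff_C]
  split <;> simp_all [lderiv_zero]

lemma DT_add (f g : (ℚ[T;T⁻¹])⟦X⟧) : DT (f + g) = DT f + DT g := by
  ext n; simp [coeff_DT, lderiv_add]

lemma lderiv_T_one : lderiv (T 1 : ℚ[T;T⁻¹]) = 1 := by
  have h : (T 1 : ℚ[T;T⁻¹]) = LaurentPolynomial.C 1 * T 1 := by simp
  rw [h, lderiv_C_mul_T]
  norm_num

lemma lderiv_T_neg_one : lderiv (T (-1) : ℚ[T;T⁻¹]) = -T (-2) := by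
  have h : (T (-1) : ℚ[T;T⁻¹]) = LaurentPolynomial.C 1 * T (-1) := by simp
  rw [h, lderiv_C_mul_T, show ((-1 : ℤ) - 1) = (-2 : ℤ) from by norm_num]
  push_cast
  rw [neg_one_mul, map_neg, map_one]
  ring

/-- Abstract algebraic core of the computation. -/
lemma main_alg (tp sp rp u v wx wt vx dv : (ℚ[T;T⁻¹])⟦X⟧)
    (hts : tp * sp = 1) (htr : tp * rp = sp)
    (hA : u = 1 + tp * (PowerSeries.X * (v * v)))
    (hB : v = 1 + sp * (PowerSeries.X * (u * u)))
    (eA : wx = tp * (v * v) + 2 * tp * PowerSeries.X * v * vx)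
    (eB : vx = sp * (u * u) + 2 * sp * PowerSeries.X * u * wx)
    (eC : wt = PowerSeries.X * (v * v) + 2 * tp * PowerSeries.X * v * dv)
    (eD : dv = -(rp * (PowerSeries.X * (u * u))) + 2 * sp * PowerSeries.X * u * wt) :
    2 * tp * (1 - u) + PowerSeries.X * (2 * PowerSeries.X * u - tp) * wx
      + 3 * tp * (tp + 2 * PowerSeries.X * u) * wt = 0 := by
  set X : (ℚ[T;T⁻¹])⟦X⟧ := PowerSeries.X with hX
  have h1 : wx * (1 - 4 * X * X * u * v) = tp * (v * v) + 2 * X * v * (u * u) := by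
    linear_combination eA + (2 * tp * X * v) * eB
      + (2 * X * u * u * v + 4 * X * X * u * v * wx) * hts
  have h2 : wt * (1 - 4 * X * X * u * v) = X * (v * v) - 2 * sp * X * X * v * (u * u) := by
    linear_combination eC + (2 * tp * X * v) * eD
      + (4 * X * X * u * v * wt) * hts - (2 * X * X * v * u * u) * htr
  have key : (2 * tp * (1 - u) + X * (2 * X * u - tp) * wx
      + 3 * tp * (tp + 2 * X * u) * wt) * (1 - 4 * X * X * u * v) = 0 := by
    linear_combination (X * (2 * X * u - tp)) * h1
      + (3 * tp * (tp + 2 * X * u)) * h2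
      + (-2 * tp) * hA
      + (8 * X * X * u * v * tp) * hB
      + (-4 * X ^ 3 * u ^ 3 * v - 6 * X ^ 2 * tp * u ^ 2 * v) * hts
  have hunit : IsUnit (1 - 4 * X * X * u * v : (ℚ[T;T⁻¹])⟦X⟧) := by
    rw [PowerSeries.isUnit_iff_constantCoeff]
    simp [hX]
  exact hunit.mul_right_cancel (key.trans (zero_mul _).symm)

lemma invert_invert (p : ℚ[T;T⁻¹]) : invert (invert p) = p := involutive_invert p

/-- The series of inverted coefficients. -/
noncomputable def vser (w : ℕ → ℚ[T;T⁻¹]) : (ℚ[T;T⁻¹])⟦X⟧ :=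
  PowerSeries.mk fun n => invert (w n)

lemma coeff_vser (w : ℕ → ℚ[T;T⁻¹]) (n : ℕ) :
    PowerSeries.coeff n (vser w) = invert (w n) := by simp [vser]

/-- For the Laurent polynomials `w n` defined by `w 0 = 1` and
`w (n+1) (t) = t * ∑_{k=0}^{n} w k (t⁻¹) * w (n-k) (t⁻¹)`, the generating series
`W = ∑ w n x^n`, its formal `x`-derivative `Wx = ∑ (n+1)·w (n+1)·x^n` and its
coefficientwise `t`-derivative `Wt = ∑ (w n)' x^n` satisfy
`2t(1−W) + x(2xW − t)·Wx + 3t(t+2xW)·Wt = 0`. -/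
theorem stmt3 (w : ℕ → ℚ[T;T⁻¹])
    (hw0 : w 0 = 1)
    (hw : ∀ n : ℕ, w (n + 1) =
      T 1 * ∑ k ∈ Finset.range (n + 1), invert (w k) * invert (w (n - k)))
    (W Wx Wt : (ℚ[T;T⁻¹])⟦X⟧)
    (hW : W = PowerSeries.mk fun n => w n)
    (hWx : Wx = PowerSeries.mk fun n => ((n : ℚ[T;T⁻¹]) + 1) * w (n + 1))
    (hWt : Wt = PowerSeries.mk fun n => lderiv (w n)) :
    2 * PowerSeries.C (T 1 : ℚ[T;T⁻¹]) * (1 - W)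
      + PowerSeries.X * (2 * PowerSeries.X * W - PowerSeries.C (T 1 : ℚ[T;T⁻¹])) * Wx
      + 3 * PowerSeries.C (T 1 : ℚ[T;T⁻¹])
          * (PowerSeries.C (T 1 : ℚ[T;T⁻¹]) + 2 * PowerSeries.X * W) * Wt = 0 := by
  have hts : PowerSeries.C (T 1 : ℚ[T;T⁻¹]) * PowerSeries.C (T (-1) : ℚ[T;T⁻¹]) = 1 := by
    rw [← map_mul, ← T_add]
    norm_num
  have htr : PowerSeries.C (T 1 : ℚ[T;T⁻¹]) * PowerSeries.C (T (-2) : ℚ[T;T⁻¹])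
      = PowerSeries.C (T (-1) : ℚ[T;T⁻¹]) := by
    rw [← map_mul, ← T_add]
    norm_num
  have hA : W = 1 + PowerSeries.C (T 1 : ℚ[T;T⁻¹])
      * (PowerSeries.X * (vser w * vser w)) := by
    refine PowerSeries.ext fun n => ?_
    rcases n with _ | n
    · simp [hW, hw0]
    · rw [hW, coeff_mk, map_add, PowerSeries.coeff_one, PowerSeries.coeff_C_mul,
        PowerSeries.coeff_succ_X_mul, PowerSeries.coeff_mul,
        Finset.Nat.sum_antidiagonal_eq_sum_range_succ_mk, hw n]
      simp [coeff_vser]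
  have hB : vser w = 1 + PowerSeries.C (T (-1) : ℚ[T;T⁻¹])
      * (PowerSeries.X * (W * W)) := by
    refine PowerSeries.ext fun n => ?_
    rcases n with _ | n
    · simp [coeff_vser, hw0]
    · rw [coeff_vser, map_add, PowerSeries.coeff_one, PowerSeries.coeff_C_mul,
        PowerSeries.coeff_succ_X_mul, PowerSeries.coeff_mul,
        Finset.Nat.sum_antidiagonal_eq_sum_range_succ_mk]
      have h := congrArg invert (hw n)
      rw [map_mul, invert_T, map_sum] at h
      simp only [map_mul, invert_invert] at h
      simp only [hW, coeff_mk, Nat.succ_ne_zero, if_false, zero_add]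
      exact h
  have hdW : d⁄dX ℚ[T;T⁻¹] W = Wx := by
    refine PowerSeries.ext fun n => ?_
    rw [PowerSeries.coeff_derivative, hW, hWx, coeff_mk, coeff_mk]
    ring
  have hDTW : DT W = Wt := by
    refine PowerSeries.ext fun n => ?_
    rw [coeff_DT, hW, hWt, coeff_mk, coeff_mk]
  have eA : Wx = PowerSeries.C (T 1 : ℚ[T;T⁻¹]) * (vser w * vser w)
      + 2 * PowerSeries.C (T 1 : ℚ[T;T⁻¹]) * PowerSeries.X * vser w
        * (d⁄dX ℚ[T;T⁻¹] (vser w)) := by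
    have h := congrArg (⇑(d⁄dX ℚ[T;T⁻¹])) hA
    rw [hdW] at h
    simp only [map_add, Derivation.map_one_eq_zero, Derivation.leibniz,
      PowerSeries.derivative_C, PowerSeries.derivative_X, smul_eq_mul, smul_zero,
      mul_zero, zero_mul, add_zero, zero_add, mul_one] at h
    linear_combination h
  have eB : d⁄dX ℚ[T;T⁻¹] (vser w) = PowerSeries.C (T (-1) : ℚ[T;T⁻¹]) * (W * W)
      + 2 * PowerSeries.C (T (-1) : ℚ[T;T⁻¹]) * PowerSeries.X * W * Wx := by
    have h := congrArg (⇑(d⁄dX ℚ[T;T⁻¹])) hB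
    simp only [map_add, Derivation.map_one_eq_zero, Derivation.leibniz,
      PowerSeries.derivative_C, PowerSeries.derivative_X, smul_eq_mul, smul_zero,
      mul_zero, zero_mul, add_zero, zero_add, mul_one, hdW] at h
    linear_combination h
  have eC : Wt = PowerSeries.X * (vser w * vser w)
      + 2 * PowerSeries.C (T 1 : ℚ[T;T⁻¹]) * PowerSeries.X * vser w * DT (vser w) := by
    have h := congrArg DT hA
    rw [hDTW] at h
    simp only [DT_add, DT_one, DT_mul, DT_X, DT_C, lderiv_T_one, map_one,
      zero_mul, mul_zero, add_zero, zero_add] at h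
    linear_combination h
  have eD : DT (vser w) = -(PowerSeries.C (T (-2) : ℚ[T;T⁻¹])
        * (PowerSeries.X * (W * W)))
      + 2 * PowerSeries.C (T (-1) : ℚ[T;T⁻¹]) * PowerSeries.X * W * Wt := by
    have h := congrArg DT hB
    simp only [DT_add, DT_one, DT_mul, DT_X, DT_C, lderiv_T_neg_one, map_one, map_neg,
      zero_mul, mul_zero, add_zero, zero_add, hDTW] at h
    linear_combination h
  exact main_alg (PowerSeries.C (T 1 : ℚ[T;T⁻¹])) (PowerSeries.C (T (-1) : ℚ[T;T⁻¹]))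
    (PowerSeries.C (T (-2) : ℚ[T;T⁻¹])) W (vser w) Wx Wt
    (d⁄dX ℚ[T;T⁻¹] (vser w)) (DT (vser w)) hts htr hA hB eA eB eC eD
end

section
/- For every n ∈ ℕ and every j ∈ ℤ with 3·|j| > n+2 one has (w_n, t^j) = 0; that is, the difference n_b − n_w of black and white triangles in any checkerboard triangulation of a convex polygon with n+2 vertices satisfies |n_b − n_w| ≤ (n+2)/3. -/
open LaurentPolynomial

lemma stmt5_key (w : ℕ → ℚ[T;T⁻¹])
    (hw0 : w 0 = 1)
    (hw : ∀ n : ℕ, w (n + 1) =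
      T 1 * ∑ k ∈ Finset.range (n + 1), invert (w k) * invert (w (n - k))) :
    ∀ n : ℕ, ∀ j : ℤ, (w n).coeff j ≠ 0 → -(n : ℤ) ≤ 3 * j ∧ 3 * j ≤ (n : ℤ) + 2 := by
  intro n
  induction n using Nat.strong_induction_on with
  | _ n IH =>
    intro j hj
    match n with
    | 0 =>
      rw [hw0] at hj
      have : (1 : ℚ[T;T⁻¹]).coeff j = if (0:ℤ) = j then (1:ℚ) else 0 := Finsupp.single_apply
      rw [this] at hj
      by_cases h0 : (0:ℤ) = j
      · subst h0; norm_num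
      · simp [h0] at hj
    | Nat.succ n =>
      rw [hw n] at hj
      have hT : (T 1 : ℚ[T;T⁻¹]) = AddMonoidAlgebra.single (1:ℤ) (1:ℚ) := rfl
      rw [hT, AddMonoidAlgebra.coeff_single_mul_apply] at hj
      rw [one_mul, AddMonoidAlgebra.coeff_sum, Finset.sum_apply'] at hj
      obtain ⟨k, hk, hne⟩ := Finset.exists_ne_zero_of_sum_ne_zero hj
      have hmem : (-1 + j) ∈ (invert (w k) * invert (w (n - k))).coeff.support :=
        Finsupp.mem_support_iff.mpr hne
      have hsub := AddMonoidAlgebra.support_coeff_mul_subset (invert (w k)) (invert (w (n - k)))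
      obtain ⟨a, ha, b, hb, hab⟩ := Finset.mem_add.mp (hsub hmem)
      have hka : (w k).coeff (-a) ≠ 0 := by
        have := Finsupp.mem_support_iff.mp ha; rwa [invert_apply] at this
      have hkb : (w (n - k)).coeff (-b) ≠ 0 := by
        have := Finsupp.mem_support_iff.mp hb; rwa [invert_apply] at this
      have hkn : k ≤ n := Nat.lt_succ_iff.mp (Finset.mem_range.mp hk)
      have h1 := IH k (Nat.lt_succ_of_le hkn) (-a) hka
      have h2 := IH (n - k) (Nat.lt_succ_of_le (Nat.sub_le n k)) (-b) hkb
      have hcast : ((n - k : ℕ) : ℤ) = (n : ℤ) - (k : ℤ) := by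
        exact_mod_cast Int.ofNat_sub hkn
      rw [hcast] at h2
      push_cast
      omega

/-- For the Laurent polynomials `w n` defined by `w 0 = 1` and
`w (n+1) (t) = t * ∑_{k=0}^{n} w k (t⁻¹) * w (n-k) (t⁻¹)`, the coefficient of `t^j`
in `w n` vanishes whenever `3·|j| > n+2`. -/
theorem stmt5 (w : ℕ → ℚ[T;T⁻¹])
    (hw0 : w 0 = 1)
    (hw : ∀ n : ℕ, w (n + 1) =
      T 1 * ∑ k ∈ Finset.range (n + 1), invert (w k) * invert (w (n - k)))
    (n : ℕ) (j : ℤ) (h : 3 * |j| > (n : ℤ) + 2) :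
    (w n).coeff j = 0 := by
  by_contra hj
  obtain ⟨h1, h2⟩ := stmt5_key w hw0 hw n j hj
  rcases abs_cases j with ⟨he, _⟩ | ⟨he, _⟩ <;> omega
end

section
/- Let T = ∑_{n≥0} w_n′(1)·x^n ∈ ℚ[[x]], where w_n′(1) = ∑_{j∈ℤ} j·(w_n, t^j) is the evaluation at t = 1 of the formal derivative of w_n. Then T satisfies the algebraic equation x − T + x(4x+3)·T² = 0. -/
open LaurentPolynomial PowerSeries

section Stmt7Aux

open TrivSqZeroExt DualNumber

lemma stmt7_mul_aux (a b : ℚ) :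
    (1 + inr a : DualNumber ℚ) * (1 + inr b) = 1 + inr (a + b) := by
  rw [mul_add, mul_one, add_mul, one_mul, inr_mul_inr, add_zero, inr_add]
  ring

/-- The unit `1 + ε` of the dual numbers. -/
noncomputable def stmt7u : (DualNumber ℚ)ˣ where
  val := 1 + inr 1
  inv := 1 + inr (-1)
  val_inv := by rw [stmt7_mul_aux]; norm_num
  inv_val := by rw [stmt7_mul_aux]; norm_num

lemma stmt7u_zpow (n : ℤ) : ((stmt7u ^ n : (DualNumber ℚ)ˣ) : DualNumber ℚ)
    = 1 + inr (n : ℚ) := by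
  induction n using Int.induction_on with
  | zero => simp
  | succ k ih =>
      have h : ((stmt7u ^ ((k : ℤ) + 1) : (DualNumber ℚ)ˣ) : DualNumber ℚ)
          = ((stmt7u ^ (k : ℤ) : (DualNumber ℚ)ˣ) : DualNumber ℚ) * (1 + inr 1) := by
        rw [zpow_add_one]; rfl
      rw [h, ih, stmt7_mul_aux]
      norm_cast
  | pred k ih =>
      have h : ((stmt7u ^ ((-k : ℤ) - 1) : (DualNumber ℚ)ˣ) : DualNumber ℚ)
          = ((stmt7u ^ (-k : ℤ) : (DualNumber ℚ)ˣ) : DualNumber ℚ) * (1 + inr (-1)) := by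
        rw [zpow_sub_one]; rfl
      rw [h, ih, stmt7_mul_aux]
      norm_cast

/-- Evaluation-with-derivative homomorphism `t ↦ 1 + ε`. -/
noncomputable def stmt7Phi : ℚ[T;T⁻¹] →ₐ[ℚ] DualNumber ℚ :=
  AddMonoidAlgebra.lift ℚ (DualNumber ℚ) ℤ
    ((Units.coeHom (DualNumber ℚ)).comp (zpowersHom (DualNumber ℚ)ˣ stmt7u))

lemma stmt7Phi_apply (p : ℚ[T;T⁻¹]) :
    stmt7Phi p = p.coeff.sum fun j a => a • (1 + inr (j : ℚ) : DualNumber ℚ) := by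
  rw [stmt7Phi, AddMonoidAlgebra.lift_apply]
  exact Finsupp.sum_congr fun j _ => by rw [MonoidHom.comp_apply]; simp [stmt7u_zpow]

lemma fst_stmt7Phi (p : ℚ[T;T⁻¹]) :
    fst (stmt7Phi p) = p.coeff.sum fun _ a => a := by
  rw [stmt7Phi_apply, Finsupp.sum, Finsupp.sum, fst_sum]
  exact Finset.sum_congr rfl fun j _ => by simp [fst_smul]

lemma snd_stmt7Phi (p : ℚ[T;T⁻¹]) :
    snd (stmt7Phi p) = p.coeff.sum fun j a => (j : ℚ) * a := by
  rw [stmt7Phi_apply, Finsupp.sum, Finsupp.sum, snd_sum]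
  refine Finset.sum_congr rfl fun j _ => ?_
  simp [snd_smul, smul_eq_mul, mul_comm]

lemma invert_sum (p : ℚ[T;T⁻¹]) (g : ℤ → ℚ → ℚ) :
    (invert p).coeff.sum g = p.coeff.sum fun j a => g (-j) a := by
  have h : (invert p).coeff = Finsupp.equivMapDomain (AddEquiv.neg ℤ).toEquiv p.coeff := by
    ext n; rw [invert_apply, Finsupp.equivMapDomain_apply]; rfl
  rw [h, Finsupp.sum_equivMapDomain]
  rfl

lemma fst_stmt7Phi_invert (p : ℚ[T;T⁻¹]) :
    fst (stmt7Phi (invert p)) = fst (stmt7Phi p) := by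
  rw [fst_stmt7Phi, fst_stmt7Phi, invert_sum]

lemma snd_stmt7Phi_invert (p : ℚ[T;T⁻¹]) :
    snd (stmt7Phi (invert p)) = - snd (stmt7Phi p) := by
  rw [snd_stmt7Phi, snd_stmt7Phi, invert_sum, Finsupp.sum, Finsupp.sum,
    ← Finset.sum_neg_distrib]
  exact Finset.sum_congr rfl fun j _ => by push_cast; ring

lemma stmt7Phi_T1 : stmt7Phi (T 1) = 1 + inr (1 : ℚ) := by
  have h : (T 1 : ℚ[T;T⁻¹]).coeff = Finsupp.single (1 : ℤ) (1 : ℚ) := rfl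
  rw [stmt7Phi_apply, h, Finsupp.sum_single_index] <;> simp

end Stmt7Aux

/-- For the Laurent polynomials `w n` defined by `w 0 = 1` and
`w (n+1) (t) = t * ∑_{k=0}^{n} w k (t⁻¹) * w (n-k) (t⁻¹)`, the series
`T = ∑_n w_n′(1) x^n ∈ ℚ[[x]]`, where `w_n′(1) = ∑_j j·(w_n, t^j)`, satisfies
`x − T + x(4x+3)T² = 0`. -/
theorem stmt7 (w : ℕ → ℚ[T;T⁻¹])
    (hw0 : w 0 = 1)
    (hw : ∀ n : ℕ, w (n + 1) =
      T 1 * ∑ k ∈ Finset.range (n + 1), invert (w k) * invert (w (n - k)))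
    (S : ℚ⟦X⟧)
    (hS : S = PowerSeries.mk fun n => (w n).coeff.sum fun j a => (j : ℚ) * a) :
    PowerSeries.X - S + PowerSeries.X * (4 * PowerSeries.X + 3) * S ^ 2 = 0 := by
  classical
  open TrivSqZeroExt DualNumber in
  -- abbreviations
  let c : ℕ → ℚ := fun n => fst (stmt7Phi (w n))
  let d : ℕ → ℚ := fun n => snd (stmt7Phi (w n))
  let C : ℚ⟦X⟧ := PowerSeries.mk c
  have hC : C = PowerSeries.mk c := rfl
  have hS' : S = PowerSeries.mk d := by
    ext n
    rw [hS, PowerSeries.coeff_mk, PowerSeries.coeff_mk]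
    exact (snd_stmt7Phi (w n)).symm
  -- recursion for c
  have hc0 : c 0 = 1 := by simp only [c, hw0]; simp
  have hd0 : d 0 = 0 := by simp only [d, hw0]; simp
  have hcrec : ∀ n : ℕ, c (n + 1) = ∑ k ∈ Finset.range (n + 1), c k * c (n - k) := by
    intro n
    show fst (stmt7Phi (w (n+1))) = _
    rw [hw n, map_mul, TrivSqZeroExt.fst_mul, stmt7Phi_T1, map_sum, TrivSqZeroExt.fst_sum]
    simp only [map_mul, TrivSqZeroExt.fst_mul, fst_stmt7Phi_invert]
    simp
    rfl
  have hdrec : ∀ n : ℕ, d (n + 1) =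
      (∑ k ∈ Finset.range (n + 1), c k * c (n - k))
      - (∑ k ∈ Finset.range (n + 1), c k * d (n - k))
      - (∑ k ∈ Finset.range (n + 1), d k * c (n - k)) := by
    intro n
    show snd (stmt7Phi (w (n+1))) = _
    rw [hw n, map_mul, DualNumber.snd_mul, stmt7Phi_T1, map_sum,
      TrivSqZeroExt.fst_sum, TrivSqZeroExt.snd_sum]
    have h1 : fst ((1 : DualNumber ℚ) + inr (1:ℚ)) = 1 := by simp
    have h2 : snd ((1 : DualNumber ℚ) + inr (1:ℚ)) = 1 := by simp
    rw [h1, h2, one_mul, one_mul]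
    simp only [map_mul, DualNumber.snd_mul, TrivSqZeroExt.fst_mul,
      fst_stmt7Phi_invert, snd_stmt7Phi_invert]
    rw [Finset.sum_add_distrib]
    simp only [mul_neg, neg_mul, Finset.sum_neg_distrib]
    ring
  -- power series identities
  have hA : C = 1 + PowerSeries.X * (C * C) := by
    ext n
    cases n with
    | zero =>
        simp [hC, hc0, PowerSeries.coeff_zero_eq_constantCoeff]
    | succ n =>
        rw [map_add, PowerSeries.coeff_one]
        simp only [Nat.succ_ne_zero, if_false, zero_add]
        rw [PowerSeries.coeff_succ_X_mul, PowerSeries.coeff_mul,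
          Finset.Nat.sum_antidiagonal_eq_sum_range_succ_mk]
        simp only [hC, PowerSeries.coeff_mk]
        exact hcrec n
  have hB : S + PowerSeries.X * (C * S) + PowerSeries.X * (S * C)
      = PowerSeries.X * (C * C) := by
    ext n
    cases n with
    | zero =>
        simp [hS', hd0, PowerSeries.coeff_zero_eq_constantCoeff]
    | succ n =>
        rw [map_add, map_add, PowerSeries.coeff_succ_X_mul,
          PowerSeries.coeff_succ_X_mul, PowerSeries.coeff_succ_X_mul,
          PowerSeries.coeff_mul, PowerSeries.coeff_mul, PowerSeries.coeff_mul,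
          Finset.Nat.sum_antidiagonal_eq_sum_range_succ_mk,
          Finset.Nat.sum_antidiagonal_eq_sum_range_succ_mk,
          Finset.Nat.sum_antidiagonal_eq_sum_range_succ_mk]
        simp only [hS', hC, PowerSeries.coeff_mk]
        rw [hdrec n]
        ring
  -- main algebraic identity
  have hZ : (PowerSeries.X - S + PowerSeries.X * (4 * PowerSeries.X + 3) * S ^ 2)
      * (1 + 2 * PowerSeries.X * C) ^ 2 = 0 := by
    linear_combination
      (-(1 + 2 * PowerSeries.X * C)
        + PowerSeries.X * (4 * PowerSeries.X + 3)
          * (S + 2 * PowerSeries.X * S * C + PowerSeries.X * C ^ 2)) * hB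
      + (-(4 * PowerSeries.X ^ 3 * C ^ 2 + 3 * PowerSeries.X ^ 2 * C ^ 2
          + 4 * PowerSeries.X ^ 2 * C + PowerSeries.X * C + PowerSeries.X)) * hA
  have hunit : (1 + 2 * PowerSeries.X * C : ℚ⟦X⟧) ≠ 0 := by
    intro h
    have h0 := congrArg (PowerSeries.constantCoeff (R := ℚ)) h
    simp [mul_assoc] at h0
  rcases mul_eq_zero.mp hZ with h | h
  · exact h
  · exact absurd (pow_eq_zero_iff (n := 2) (by norm_num) |>.mp h) hunit
end

section
/- With w_n′(1) = ∑_{j∈ℤ} j·(w_n, t^j), one has the asymptotic equivalence w_n′(1) ∼ (3/8)·binom(2n,n)/(n+1) as n → ∞; equivalently, the sequence n ↦ w_n′(1)·(n+1)/binom(2n,n) converges to 3/8. In particular, uniform random triangulations have asymptotic mean value n_b − n_w = 3/8. -/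
open LaurentPolynomial Filter DualNumber TrivSqZeroExt Finset

/-! ### Auxiliary: evaluation of Laurent polynomials in the dual numbers
`phi` sends `T^j` to `1 + j·ε`, so that for `p = ∑ cⱼ T^j` we get
`phi p = (p(1), p'(1))`. -/

noncomputable def emh : Multiplicative ℤ →* DualNumber ℚ where
  toFun j := inl 1 + inr ((Multiplicative.toAdd j : ℤ) : ℚ)
  map_one' := by
    ext <;> simp
  map_mul' x y := by
    ext
    · simp
    · simp [mul_comm]
      ring

noncomputable def phi : ℚ[T;T⁻¹] →ₐ[ℚ] DualNumber ℚ :=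
  AddMonoidAlgebra.lift ℚ (DualNumber ℚ) ℤ emh

lemma phi_single (j : ℤ) (a : ℚ) : phi (AddMonoidAlgebra.single j a) = inl a + inr (a * j) := by
  rw [phi, AddMonoidAlgebra.lift_single]
  ext
  · simp [emh]
  · simp [emh, mul_comm]

lemma fst_phi (p : ℚ[T;T⁻¹]) : (phi p).fst = p.coeff.sum fun _ a => a := by
  induction p using AddMonoidAlgebra.induction_linear with
  | zero => simp
  | add p q hp hq =>
      rw [map_add, AddMonoidAlgebra.coeff_add, Finsupp.sum_add_index (by simp) (by intros; rfl), fst_add, hp, hq]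
  | single j a =>
      rw [phi_single, AddMonoidAlgebra.coeff_single, Finsupp.sum_single_index rfl]
      simp

lemma snd_phi (p : ℚ[T;T⁻¹]) : (phi p).snd = p.coeff.sum fun j a => (j : ℚ) * a := by
  induction p using AddMonoidAlgebra.induction_linear with
  | zero => simp
  | add p q hp hq =>
      rw [map_add, AddMonoidAlgebra.coeff_add, Finsupp.sum_add_index (by simp) (by intros; ring), snd_add, hp, hq]
  | single j a =>
      rw [phi_single, AddMonoidAlgebra.coeff_single, Finsupp.sum_single_index (by simp)]
      simp [mul_comm]

lemma phi_invert (p : ℚ[T;T⁻¹]) :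
    phi (invert p) = inl (phi p).fst + inr (-(phi p).snd) := by
  induction p using AddMonoidAlgebra.induction_linear with
  | zero => simp
  | add p q hp hq =>
      rw [map_add, map_add, hp, hq]
      ext <;> simp <;> ring
  | single j a =>
      rw [show invert (AddMonoidAlgebra.single j a : ℚ[T;T⁻¹]) = AddMonoidAlgebra.single (-j) a by
        rw [invert]; exact AddMonoidAlgebra.domCongr_single ..]
      rw [phi_single, phi_single]
      ext <;> simp

lemma phi_T1 : phi (T 1) = inl 1 + inr 1 := by
  have : (T 1 : ℚ[T;T⁻¹]) = AddMonoidAlgebra.single (1 : ℤ) (1 : ℚ) := rfl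
  rw [this, phi_single]; norm_num

/-! ### Catalan number facts -/

lemma catconv (m : ℕ) :
    (catalan (m+1) : ℚ) = ∑ k ∈ range (m+1), (catalan k : ℚ) * catalan (m-k) := by
  rw [catalan_succ', Nat.sum_antidiagonal_eq_sum_range_succ (f := fun i j => catalan i * catalan j)]
  push_cast
  rfl

lemma catalan_ratio (n : ℕ) : ((n:ℚ)+2) * catalan (n+1) = 2*(2*(n:ℚ)+1) * catalan n := by
  have c1 : ((n:ℚ)+2) * catalan (n+1) = Nat.centralBinom (n+1) := by
    exact_mod_cast succ_mul_catalan_eq_centralBinom (n+1)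
  have c2 : ((n:ℚ)+1) * Nat.centralBinom (n+1) = 2 * (2*(n:ℚ)+1) * Nat.centralBinom n := by
    exact_mod_cast Nat.succ_mul_centralBinom_succ n
  have c3 : ((n:ℚ) + 1) * catalan n = Nat.centralBinom n := by
    exact_mod_cast succ_mul_catalan_eq_centralBinom n
  have hne : ((n:ℚ)+1) ≠ 0 := by positivity
  apply mul_left_cancel₀ hne
  nlinarith [c1, c2, c3]

/-! ### From the convolution recurrence to the three-term linear recurrence -/

lemma lin_of_rec (D : ℕ → ℚ) (hD0 : D 0 = 0)
    (hrec : ∀ n, D (n+1) =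
      (catalan (n+1) : ℚ) - 2 * ∑ k ∈ range (n+1), (catalan (n-k) : ℚ) * D k) :
    ∀ n, 3 * D (n+1) + 4 * D n = (catalan (n+1) : ℚ) + 2 * catalan n := by
  intro n
  induction n using Nat.strong_induction_on with
  | _ n ih =>
    match n with
    | 0 =>
        have h := hrec 0
        simp [hD0, catalan_one, catalan_zero] at h
        simp [h, hD0, catalan_one, catalan_zero]
        norm_num
    | m+1 =>
        have h1 := hrec (m+1)
        have h2 := hrec m
        have hS1 : ∑ k ∈ range (m+2), (catalan (m+1-k) : ℚ) * D k
            = ∑ k ∈ range (m+1), (catalan (m-k) : ℚ) * D (k+1) := by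
          rw [Finset.sum_range_succ' (fun k => (catalan (m+1-k) : ℚ) * D k) (m+1)]
          simp [hD0, Nat.succ_sub_succ]
        have hcomb : 6 * (∑ k ∈ range (m+1), (catalan (m-k) : ℚ) * D (k+1))
              + 8 * (∑ k ∈ range (m+1), (catalan (m-k) : ℚ) * D k)
            = ∑ k ∈ range (m+1), 2 * (catalan (m-k) : ℚ) *
                ((catalan (k+1) : ℚ) + 2 * catalan k) := by
          rw [Finset.mul_sum, Finset.mul_sum, ← Finset.sum_add_distrib]
          refine Finset.sum_congr rfl fun k hk => ?_
          have hk' : k < m+1 := Finset.mem_range.mp hk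
          have := ih k hk'
          linear_combination 2 * ((catalan (m-k) : ℕ) : ℚ) * this
        have hc1 : ∑ k ∈ range (m+1), (catalan (m-k) : ℚ) * catalan k = catalan (m+1) := by
          rw [catconv m]
          exact Finset.sum_congr rfl fun k _ => by ring
        have hc2 : ∑ k ∈ range (m+1), (catalan (m-k) : ℚ) * catalan (k+1)
            = (catalan (m+2) : ℚ) - catalan (m+1) := by
          have := catconv (m+1)
          rw [Finset.sum_range_succ' (fun k => (catalan k : ℚ) * catalan (m+1-k)) (m+1)] at this
          simp only [Nat.succ_sub_succ, Nat.sub_zero] at this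
          have h0 : ((catalan 0 : ℚ)) * catalan (m+1) = catalan (m+1) := by
            simp [catalan_zero]
          rw [h0] at this
          have : ∑ k ∈ range (m+1), (catalan (k+1) : ℚ) * catalan (m-k)
              = (catalan (m+2) : ℚ) - catalan (m+1) := by linarith
          rw [← this]
          exact Finset.sum_congr rfl fun k _ => by ring
        have hsum : ∑ k ∈ range (m+1), 2 * (catalan (m-k) : ℚ) *
                ((catalan (k+1) : ℚ) + 2 * catalan k)
            = 2 * (∑ k ∈ range (m+1), (catalan (m-k) : ℚ) * catalan (k+1))
              + 4 * (∑ k ∈ range (m+1), (catalan (m-k) : ℚ) * catalan k) := by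
          rw [Finset.mul_sum, Finset.mul_sum, ← Finset.sum_add_distrib]
          exact Finset.sum_congr rfl fun k _ => by ring
        rw [hc1, hc2] at hsum
        rw [hS1] at h1
        rw [hsum] at hcomb
        push_cast at h1 h2 hcomb ⊢
        linarith

/-! ### The analytic part -/

lemma num_part (D : ℕ → ℚ) (hD0 : D 0 = 0)
    (hlin : ∀ n, 3 * D (n+1) + 4 * D n = (catalan (n+1) : ℚ) + 2 * catalan n) :
    Tendsto (fun n : ℕ => ((D n : ℝ)) * ((n:ℝ)+1) / (((2*n).choose n : ℕ) : ℝ))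
      atTop (nhds (3/8 : ℝ)) := by
  have hCpos : ∀ n, (0:ℚ) < catalan n := by
    intro n
    have h := Nat.centralBinom_pos n
    rw [← succ_mul_catalan_eq_centralBinom] at h
    exact_mod_cast Nat.pos_of_ne_zero fun h0 => by simp [h0] at h
  set e : ℕ → ℚ := fun n => D n / (catalan n : ℚ) - 3/8 with he
  have key : ∀ n : ℕ, e (n+1) = 1/(8*(2*(n:ℚ)+1)) - (2*((n:ℚ)+2)/(3*(2*(n:ℚ)+1))) * e n := by
    intro n
    have hd : D (n+1) = ((catalan (n+1):ℚ) + 2*catalan n - 4*D n)/3 := by linarith [hlin n]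
    have hq1 : ((catalan (n+1) : ℕ) : ℚ) = 2*(2*(n:ℚ)+1)*(catalan n : ℚ)/((n:ℚ)+2) := by
      rw [eq_div_iff (by positivity)]
      linarith [catalan_ratio n]
    simp only [he]
    rw [hd, hq1]
    have h1 : ((n:ℚ)+2) ≠ 0 := by positivity
    have h2 : (2*(n:ℚ)+1) ≠ 0 := by positivity
    have h3 : (catalan n : ℚ) ≠ 0 := ne_of_gt (hCpos n)
    field_simp
    ring
  have hstep : ∀ n : ℕ, |e (n+1)| ≤ 1/(8*(2*(n:ℚ)+1)) + (2*((n:ℚ)+2)/(3*(2*(n:ℚ)+1))) * |e n| := by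
    intro n
    rw [key n]
    refine (abs_sub _ _).trans ?_
    gcongr
    · rw [abs_of_pos (by positivity)]
    · rw [abs_mul, abs_of_pos (by positivity : (0:ℚ) < 2*((n:ℚ)+2)/(3*(2*(n:ℚ)+1)))]
  have hD1 : D 1 = 1 := by have := hlin 0; simp [catalan_one, catalan_zero, hD0] at this; linarith
  have hD2 : D 2 = 0 := by have := hlin 1; simp [catalan_one, catalan_two, hD1] at this; linarith
  have hD3 : D 3 = 3 := by have := hlin 2; simp [catalan_two, catalan_three, hD2] at this; linarith
  have he3 : |e 3| ≤ 2/4 := by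
    have : (catalan 3 : ℚ) = 5 := by norm_num [catalan_three]
    simp [he, hD3, this]
    norm_num [abs_le]
  have hbound : ∀ m : ℕ, |e (m+3)| ≤ 2/((m:ℚ)+4) := by
    intro m
    induction m with
    | zero => simpa using he3
    | succ m ih =>
        have h := hstep (m+3)
        push_cast at h ⊢
        have hx : (0:ℚ) ≤ (m:ℚ) := Nat.cast_nonneg m
        calc |e (m+1+3)| = |e ((m+3)+1)| := by ring_nf
          _ ≤ 1/(8*(2*((m:ℚ)+3)+1)) + (2*(((m:ℚ)+3)+2)/(3*(2*((m:ℚ)+3)+1))) * |e (m+3)| := h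
          _ ≤ 1/(8*(2*((m:ℚ)+3)+1)) + (2*(((m:ℚ)+3)+2)/(3*(2*((m:ℚ)+3)+1))) * (2/((m:ℚ)+4)) := by
              gcongr
          _ ≤ 2/((m:ℚ)+1+4) := by
              rw [div_mul_div_comm,
                div_add_div _ _ (by positivity) (by positivity),
                div_le_div_iff₀ (by positivity) (by positivity)]
              nlinarith [hx, sq_nonneg ((m:ℚ))]
  have htend0 : Tendsto (fun n : ℕ => ((e n : ℚ) : ℝ)) atTop (nhds 0) := by
    rw [tendsto_zero_iff_abs_tendsto_zero]
    apply squeeze_zero' (g := fun n : ℕ => 2 * (1/((n:ℝ)+1)))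
    · exact Eventually.of_forall fun n => abs_nonneg _
    · filter_upwards [eventually_ge_atTop 3] with n hn
      obtain ⟨m, rfl⟩ := Nat.exists_eq_add_of_le hn
      have hb := hbound m
      show |((e (3+m) : ℚ) : ℝ)| ≤ 2 * (1/((((3+m : ℕ)):ℝ)+1))
      rw [← Rat.cast_abs]
      have h2 : ((|e (3+m)| : ℚ) : ℝ) ≤ ((2/((m:ℚ)+4) : ℚ) : ℝ) := by
        exact_mod_cast (by rw [add_comm]; exact hb : |e (3+m)| ≤ 2/((m:ℚ)+4))
      refine h2.trans (le_of_eq ?_)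
      push_cast
      ring
    · simpa using tendsto_one_div_add_atTop_nhds_zero_nat.const_mul (2:ℝ)
  have htend : Tendsto (fun n : ℕ => ((D n / (catalan n : ℚ) : ℚ) : ℝ)) atTop (nhds (3/8 : ℝ)) := by
    have h := htend0.add_const (3/8 : ℝ)
    rw [zero_add] at h
    refine h.congr fun n => ?_
    simp only [he]
    push_cast
    ring
  refine htend.congr fun n => ?_
  have hc : (((2*n).choose n : ℕ) : ℝ) = ((n:ℝ)+1) * ((catalan n : ℕ) : ℝ) := by
    exact_mod_cast (succ_mul_catalan_eq_centralBinom n).symm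
  rw [hc]
  have h3 : ((catalan n : ℕ) : ℝ) ≠ 0 := by
    have h5 : 0 < catalan n := by exact_mod_cast hCpos n
    positivity
  have h4 : ((n:ℝ)+1) ≠ 0 := by positivity
  rw [Rat.cast_div]
  push_cast
  field_simp

/-- For the Laurent polynomials `w n` defined by `w 0 = 1` and
`w (n+1) (t) = t * ∑_{k=0}^{n} w k (t⁻¹) * w (n-k) (t⁻¹)`, and
`w_n′(1) = ∑_j j·(w_n, t^j)`, one has `w_n′(1) ∼ (3/8)·binom(2n,n)/(n+1)` as `n → ∞`,
i.e. `w_n′(1)·(n+1)/binom(2n,n) → 3/8`. -/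
theorem stmt8 (w : ℕ → ℚ[T;T⁻¹])
    (hw0 : w 0 = 1)
    (hw : ∀ n : ℕ, w (n + 1) =
      T 1 * ∑ k ∈ Finset.range (n + 1), invert (w k) * invert (w (n - k))) :
    Tendsto (fun n : ℕ =>
        ((((w n).coeff.sum fun j a => (j : ℚ) * a : ℚ)) : ℝ) * ((n : ℝ) + 1)
          / ((2 * n).choose n : ℝ))
      atTop (nhds (3 / 8 : ℝ)) := by
  set A : ℕ → ℚ := fun n => (phi (w n)).fst with hA
  set D : ℕ → ℚ := fun n => (phi (w n)).snd with hD
  have hA0 : A 0 = 1 := by simp [hA, hw0]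
  have hD0 : D 0 = 0 := by simp [hD, hw0]
  have key : ∀ n, phi (w (n+1)) =
      inl (∑ k ∈ Finset.range (n + 1), A k * A (n-k)) +
      inr ((∑ k ∈ Finset.range (n + 1), A k * A (n-k))
        - ∑ k ∈ Finset.range (n + 1), (A k * D (n-k) + A (n-k) * D k)) := by
    intro n
    rw [hw n, map_mul, map_sum, phi_T1]
    have : ∀ k ∈ Finset.range (n+1),
        phi (invert (w k) * invert (w (n-k))) =
        inl (A k * A (n-k)) + inr (-(A k * D (n-k) + A (n-k) * D k)) := by
      intro k _
      rw [map_mul, phi_invert, phi_invert]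
      ext <;> simp <;> ring
    rw [Finset.sum_congr rfl this]
    ext
    · simp [fst_mul, fst_sum]
    · simp [DualNumber.snd_mul, snd_sum, fst_sum, ← Finset.sum_add_distrib,
        sub_eq_add_neg, ← Finset.sum_neg_distrib]
      exact Finset.sum_congr rfl fun x _ => by ring
  have hArec : ∀ n, A (n+1) = ∑ k ∈ Finset.range (n + 1), A k * A (n-k) := by
    intro n
    simp only [hA]
    rw [key n]
    simp
    rfl
  have hAcat : ∀ n, A n = (catalan n : ℚ) := by
    intro n
    induction n using Nat.strong_induction_on with
    | _ n ih =>
      match n with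
      | 0 => simpa [catalan_zero] using hA0
      | n+1 =>
          rw [hArec n, catconv n]
          refine Finset.sum_congr rfl fun k hk => ?_
          have hk' : k < n+1 := Finset.mem_range.mp hk
          rw [ih k hk', ih (n-k) (by omega)]
  have hDrec : ∀ n, D (n+1) =
      (catalan (n+1) : ℚ) - 2 * ∑ k ∈ Finset.range (n+1), (catalan (n-k) : ℚ) * D k := by
    intro n
    have h1 : D (n+1) = (∑ k ∈ Finset.range (n+1), A k * A (n-k))
        - ∑ k ∈ Finset.range (n+1), (A k * D (n-k) + A (n-k) * D k) := by
      simp only [hD]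
      rw [key n]
      simp
      rfl
    have h2 : ∑ k ∈ Finset.range (n+1), A k * A (n-k) = (catalan (n+1) : ℚ) := by
      rw [catconv n]
      exact Finset.sum_congr rfl fun k hk => by rw [hAcat, hAcat]
    have h3 : ∑ k ∈ Finset.range (n+1), A k * D (n-k)
        = ∑ k ∈ Finset.range (n+1), A (n-k) * D k := by
      have hr := Finset.sum_range_reflect (fun k => A (n-k) * D k) (n+1)
      simp only [Nat.add_sub_cancel] at hr
      rw [← hr]
      refine Finset.sum_congr rfl fun k hk => ?_
      have hk' : k < n+1 := Finset.mem_range.mp hk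
      rw [Nat.sub_sub_self (by omega : k ≤ n)]
    have h4 : ∑ k ∈ Finset.range (n+1), (A k * D (n-k) + A (n-k) * D k)
        = 2 * ∑ k ∈ Finset.range (n+1), (catalan (n-k) : ℚ) * D k := by
      rw [Finset.sum_add_distrib, h3, Finset.mul_sum, ← Finset.sum_add_distrib]
      exact Finset.sum_congr rfl fun k _ => by rw [hAcat (n-k)]; ring
    rw [h1, h2, h4]
  have hlin := lin_of_rec D hD0 hDrec
  have hmain := num_part D hD0 hlin
  refine hmain.congr fun n => ?_
  have hsum : (w n).coeff.sum (fun j a => (j : ℚ) * a) = D n := (snd_phi (w n)).symm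
  rw [hsum]
end

section
/- For every nonzero complex number t and every complex number x with max(|t|^{1/3}·|x|, |t|^{−1/3}·|x|) < 1/4, the series ∑_{n≥0} w_n(t)·x^n converges absolutely, where w_n(t) = ∑_{j∈ℤ} (w_n, t^j)·t^j ∈ ℂ is the evaluation of the Laurent polynomial w_n at t. -/
open LaurentPolynomial

noncomputable def stmt9Ev (u : ℂˣ) : LaurentPolynomial ℚ →ₐ[ℚ] ℂ :=
  AddMonoidAlgebra.lift ℚ ℂ ℤ ((Units.coeHom ℂ).comp (zpowersHom ℂˣ u))

lemma stmt9Ev_apply (u : ℂˣ) (p : LaurentPolynomial ℚ) :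
    stmt9Ev u p = p.coeff.sum fun j a => (a : ℂ) * (u : ℂ) ^ j := by
  rw [stmt9Ev, AddMonoidAlgebra.lift_apply]
  refine Finsupp.sum_congr fun j _ => ?_
  simp [Rat.smul_def, Units.val_zpow_eq_zpow_val]

lemma stmt9Ev_T (u : ℂˣ) (n : ℤ) : stmt9Ev u (T n) = (u : ℂ) ^ n := by
  rw [stmt9Ev, T, AddMonoidAlgebra.lift_single]; simp [Units.val_zpow_eq_zpow_val]

lemma stmt9Ev_invert (u : ℂˣ) (p : LaurentPolynomial ℚ) :
    stmt9Ev u (invert p) = stmt9Ev u⁻¹ p := by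
  have h : (stmt9Ev u).comp (invert : LaurentPolynomial ℚ ≃ₐ[ℚ] LaurentPolynomial ℚ).toAlgHom
      = stmt9Ev u⁻¹ := by
    apply AddMonoidAlgebra.algHom_ext
    intro x
    have hx : (AddMonoidAlgebra.single x (1 : ℚ) : LaurentPolynomial ℚ) = T x := rfl
    simp only [AlgHom.coe_comp, Function.comp_apply, AlgEquiv.toAlgHom_eq_coe,
      AlgHom.coe_coe, hx, invert_T, stmt9Ev_T]
    erw [invert_T]
    rw [stmt9Ev_T, zpow_neg]
    simp
    exact Subsingleton.elim _ _
  have := DFunLike.congr_fun h p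
  simpa using this

lemma stmt9_rpow_le_max {s a e b : ℝ} (hs : 0 < s) (h1 : a ≤ e) (h2 : e ≤ b) :
    s ^ e ≤ max (s ^ a) (s ^ b) := by
  rcases le_total s 1 with h | h
  · exact le_max_of_le_left (Real.rpow_le_rpow_of_exponent_ge hs h h1)
  · exact le_max_of_le_right (Real.rpow_le_rpow_of_exponent_le h h2)

lemma stmt9_prod_max_le {s a b c d lo hi : ℝ} (hs : 0 < s)
    (h1 : lo ≤ a + c) (h1' : a + c ≤ hi) (h2 : lo ≤ a + d) (h2' : a + d ≤ hi)
    (h3 : lo ≤ b + c) (h3' : b + c ≤ hi) (h4 : lo ≤ b + d) (h4' : b + d ≤ hi) :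
    max (s ^ a) (s ^ b) * max (s ^ c) (s ^ d) ≤ max (s ^ lo) (s ^ hi) := by
  rcases max_cases (s ^ a) (s ^ b) with ⟨h, _⟩ | ⟨h, _⟩ <;>
    rcases max_cases (s ^ c) (s ^ d) with ⟨h', _⟩ | ⟨h', _⟩ <;>
      rw [h, h', ← Real.rpow_add hs]
  · exact stmt9_rpow_le_max hs h1 h1'
  · exact stmt9_rpow_le_max hs h2 h2'
  · exact stmt9_rpow_le_max hs h3 h3'
  · exact stmt9_rpow_le_max hs h4 h4'

lemma stmt9_catalan_le (n : ℕ) : catalan n ≤ 4 ^ n := by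
  have h1 : catalan n ≤ n.centralBinom := by
    calc catalan n ≤ (n + 1) * catalan n := Nat.le_mul_of_pos_left _ n.succ_pos
      _ = n.centralBinom := succ_mul_catalan_eq_centralBinom n
  have h2 : n.centralBinom ≤ 4 ^ n := by
    calc n.centralBinom = (2 * n).choose n := rfl
      _ ≤ ∑ i ∈ Finset.range (2 * n + 1), (2 * n).choose i :=
        Finset.single_le_sum (fun i _ => Nat.zero_le _) (Finset.mem_range.mpr (by omega))
      _ = 2 ^ (2 * n) := Nat.sum_range_choose (2 * n)
      _ = 4 ^ n := by rw [pow_mul]; norm_num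
  exact h1.trans h2

lemma stmt9_catalan_sum (n : ℕ) :
    ∑ k ∈ Finset.range (n + 1), catalan k * catalan (n - k) = catalan (n + 1) := by
  rw [catalan_succ, Finset.sum_range]

/-- For the Laurent polynomials `w n` defined by `w 0 = 1` and
`w (n+1) (t) = t * ∑_{k=0}^{n} w k (t⁻¹) * w (n-k) (t⁻¹)`, and every `t ∈ ℂ*`, `x ∈ ℂ`
with `max(|t|^{1/3}|x|, |t|^{−1/3}|x|) < 1/4`, the series `∑_n w_n(t)·x^n` converges
absolutely, `w_n(t) = ∑_j (w_n, t^j)·t^j` being the evaluation of `w n` at `t`. -/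
theorem stmt9 (w : ℕ → ℚ[T;T⁻¹])
    (hw0 : w 0 = 1)
    (hw : ∀ n : ℕ, w (n + 1) =
      T 1 * ∑ k ∈ Finset.range (n + 1), invert (w k) * invert (w (n - k)))
    (t x : ℂ) (ht : t ≠ 0)
    (hbound : max (‖t‖ ^ ((1 : ℝ) / 3) * ‖x‖)
        (‖t‖ ^ (-(1 : ℝ) / 3) * ‖x‖) < 1 / 4) :
    Summable fun n : ℕ =>
      ‖((w n).coeff.sum fun j a => (a : ℂ) * t ^ j) * x ^ n‖ := by
  have key : ∀ n : ℕ, ∀ v : ℂˣ, ‖stmt9Ev v (w n)‖ ≤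
      (catalan n : ℝ) * max (‖(v : ℂ)‖ ^ (((n : ℝ) + 2) / 3))
        (‖(v : ℂ)‖ ^ (-(n : ℝ) / 3)) := by
    intro n
    induction n using Nat.strong_induction_on with
    | _ n ih =>
      intro v
      have hv : (0 : ℝ) < ‖(v : ℂ)‖ := norm_pos_iff.mpr v.ne_zero
      cases n with
      | zero =>
        rw [hw0, map_one, norm_one]
        have h0 : -((0 : ℕ) : ℝ) / 3 = 0 := by norm_num
        rw [h0, Real.rpow_zero]
        simpa using le_max_right (‖(v : ℂ)‖ ^ ((((0 : ℕ) : ℝ) + 2) / 3)) (1 : ℝ)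
      | succ n =>
        set sv := ‖(v : ℂ)‖ with hsv
        have hvinv : ‖((v⁻¹ : ℂˣ) : ℂ)‖ = sv⁻¹ := by
          rw [Units.val_inv_eq_inv_val, norm_inv]
        have hinv : ∀ e : ℝ, (sv⁻¹ : ℝ) ^ e = sv ^ (-e) := fun e => by
          rw [Real.inv_rpow hv.le, ← Real.rpow_neg hv.le]
        rw [hw n, map_mul, map_sum, stmt9Ev_T]
        set M : ℝ := max (sv ^ (-((n : ℝ) + 4) / 3)) (sv ^ ((n : ℝ) / 3)) with hM
        have hM0 : 0 ≤ M := le_trans (Real.rpow_nonneg hv.le _) (le_max_left _ _)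
        have hsum : ‖∑ k ∈ Finset.range (n + 1),
            stmt9Ev v (invert (w k) * invert (w (n - k)))‖ ≤
            (catalan (n + 1) : ℝ) * M := by
          refine le_trans (norm_sum_le _ _) ?_
          have hterm : ∀ k ∈ Finset.range (n + 1),
              ‖stmt9Ev v (invert (w k) * invert (w (n - k)))‖ ≤
              ((catalan k * catalan (n - k) : ℕ) : ℝ) * M := by
            intro k hk
            have hkn : k ≤ n := Nat.lt_succ_iff.mp (Finset.mem_range.mp hk)
            have hk0 : (0 : ℝ) ≤ (k : ℝ) := Nat.cast_nonneg k
            have hkn' : (k : ℝ) ≤ (n : ℝ) := by exact_mod_cast hkn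
            set m := n - k with hm
            have hmn : (m : ℝ) = (n : ℝ) - (k : ℝ) := by
              rw [hm, Nat.cast_sub hkn]
            rw [map_mul, norm_mul, stmt9Ev_invert, stmt9Ev_invert]
            have b1 := ih k (by omega) v⁻¹
            have b2 := ih m (by omega) v⁻¹
            rw [hvinv] at b1 b2
            simp only [hinv] at b1 b2
            calc ‖stmt9Ev v⁻¹ (w k)‖ * ‖stmt9Ev v⁻¹ (w m)‖
                ≤ ((catalan k : ℝ) * max (sv ^ (-(((k : ℝ) + 2) / 3))) (sv ^ (-(-(k : ℝ) / 3)))) *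
                  ((catalan m : ℝ) * max (sv ^ (-(((m : ℝ) + 2) / 3))) (sv ^ (-(-(m : ℝ) / 3)))) :=
                mul_le_mul b1 b2 (norm_nonneg _) (le_trans (norm_nonneg _) b1)
              _ = ((catalan k : ℝ) * (catalan m : ℝ)) *
                  (max (sv ^ (-(((k : ℝ) + 2) / 3))) (sv ^ (-(-(k : ℝ) / 3))) *
                   max (sv ^ (-(((m : ℝ) + 2) / 3))) (sv ^ (-(-(m : ℝ) / 3)))) := by ring
              _ ≤ ((catalan k * catalan m : ℕ) : ℝ) * M := by
                  push_cast
                  refine mul_le_mul_of_nonneg_left ?_ (by positivity)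
                  rw [hM]
                  refine stmt9_prod_max_le hv ?_ ?_ ?_ ?_ ?_ ?_ ?_ ?_ <;>
                    rw [hmn] <;> linarith
          refine le_trans (Finset.sum_le_sum hterm) ?_
          rw [← Finset.sum_mul]
          have hcs : (∑ k ∈ Finset.range (n + 1), ((catalan k * catalan (n - k) : ℕ) : ℝ))
              = (catalan (n + 1) : ℝ) := by
            rw [← Nat.cast_sum, stmt9_catalan_sum]
          rw [hcs]
        calc ‖(v : ℂ) ^ (1 : ℤ) * ∑ k ∈ Finset.range (n + 1),
              stmt9Ev v (invert (w k) * invert (w (n - k)))‖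
            = sv * ‖∑ k ∈ Finset.range (n + 1),
              stmt9Ev v (invert (w k) * invert (w (n - k)))‖ := by
              rw [norm_mul]; norm_num [hsv]
          _ ≤ sv * ((catalan (n + 1) : ℝ) * M) := mul_le_mul_of_nonneg_left hsum hv.le
          _ = (catalan (n + 1) : ℝ) * (sv * M) := by ring
          _ ≤ (catalan (n + 1) : ℝ) *
              max (sv ^ ((((n + 1 : ℕ) : ℝ) + 2) / 3)) (sv ^ (-((n + 1 : ℕ) : ℝ) / 3)) := by
              refine mul_le_mul_of_nonneg_left (le_of_eq ?_) (Nat.cast_nonneg _)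
              rw [hM, mul_max_of_nonneg _ _ hv.le]
              have e1 : sv * sv ^ (-((n : ℝ) + 4) / 3) = sv ^ (-((n + 1 : ℕ) : ℝ) / 3) := by
                rw [show -((n + 1 : ℕ) : ℝ) / 3 = 1 + -((n : ℝ) + 4) / 3 by push_cast; ring,
                  Real.rpow_add hv, Real.rpow_one]
              have e2 : sv * sv ^ ((n : ℝ) / 3) = sv ^ ((((n + 1 : ℕ) : ℝ) + 2) / 3) := by
                rw [show (((n + 1 : ℕ) : ℝ) + 2) / 3 = 1 + (n : ℝ) / 3 by push_cast; ring,
                  Real.rpow_add hv, Real.rpow_one]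
              rw [e1, e2, max_comm]
  -- now the summability argument
  have hs0 : (0 : ℝ) < ‖t‖ := norm_pos_iff.mpr ht
  set A : ℝ := max (‖t‖ ^ ((1 : ℝ) / 3)) (‖t‖ ^ (-(1 : ℝ) / 3)) with hA
  have hA0 : 0 < A := lt_of_lt_of_le (Real.rpow_pos_of_pos hs0 _) (le_max_left _ _)
  have hA1 : 1 ≤ A := by
    rcases le_total (‖t‖) 1 with h | h
    · refine le_max_of_le_right ?_
      calc (1 : ℝ) = ‖t‖ ^ (0 : ℝ) := (Real.rpow_zero _).symm
        _ ≤ ‖t‖ ^ (-(1 : ℝ) / 3) :=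
          Real.rpow_le_rpow_of_exponent_ge hs0 h (by norm_num)
    · refine le_max_of_le_left ?_
      calc (1 : ℝ) = ‖t‖ ^ (0 : ℝ) := (Real.rpow_zero _).symm
        _ ≤ ‖t‖ ^ ((1 : ℝ) / 3) :=
          Real.rpow_le_rpow_of_exponent_le h (by norm_num)
  set r : ℝ := 4 * (A * ‖x‖) with hr
  have hr0 : (0 : ℝ) ≤ r := by positivity
  have hr1 : r < 1 := by
    have hax : A * ‖x‖ < 1 / 4 := by
      rw [hA, max_mul_of_nonneg _ _ (norm_nonneg x)]
      exact hbound
    rw [hr]; linarith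
  have hcomp : ∀ n : ℕ, ‖((w n).coeff.sum fun j a => (a : ℂ) * t ^ j) * x ^ n‖
      ≤ A ^ 2 * r ^ n := by
    intro n
    have hu : ((Units.mk0 t ht : ℂˣ) : ℂ) = t := rfl
    have h1 : ‖(w n).coeff.sum fun j a => (a : ℂ) * t ^ j‖
        ≤ (catalan n : ℝ) * max (‖t‖ ^ (((n : ℝ) + 2) / 3))
          (‖t‖ ^ (-(n : ℝ) / 3)) := by
      have hk := key n (Units.mk0 t ht)
      rw [stmt9Ev_apply] at hk
      simpa [hu] using hk
    have h2 : max (‖t‖ ^ (((n : ℝ) + 2) / 3)) (‖t‖ ^ (-(n : ℝ) / 3))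
        ≤ A ^ (n + 2) := by
      refine max_le ?_ ?_
      · have e : ‖t‖ ^ (((n : ℝ) + 2) / 3)
            = (‖t‖ ^ ((1 : ℝ) / 3)) ^ (n + 2 : ℕ) := by
          rw [← Real.rpow_natCast (‖t‖ ^ ((1 : ℝ) / 3)) (n + 2),
            ← Real.rpow_mul hs0.le]
          push_cast
          ring_nf
        rw [e, hA]
        exact pow_le_pow_left₀ (Real.rpow_nonneg hs0.le _) (le_max_left _ _) _
      · have e : ‖t‖ ^ (-(n : ℝ) / 3)
            = (‖t‖ ^ (-(1 : ℝ) / 3)) ^ (n : ℕ) := by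
          rw [← Real.rpow_natCast (‖t‖ ^ (-(1 : ℝ) / 3)) n,
            ← Real.rpow_mul hs0.le]
          push_cast
          ring_nf
        rw [e, hA]
        calc (‖t‖ ^ (-(1 : ℝ) / 3)) ^ n
            ≤ A ^ n := pow_le_pow_left₀ (Real.rpow_nonneg hs0.le _) (le_max_right _ _) _
          _ ≤ A ^ (n + 2) := pow_le_pow_right₀ hA1 (by omega)
    calc ‖((w n).coeff.sum fun j a => (a : ℂ) * t ^ j) * x ^ n‖
        = ‖(w n).coeff.sum fun j a => (a : ℂ) * t ^ j‖ * ‖x‖ ^ n := by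
          rw [norm_mul, norm_pow]
      _ ≤ ((catalan n : ℝ) * max (‖t‖ ^ (((n : ℝ) + 2) / 3))
            (‖t‖ ^ (-(n : ℝ) / 3))) * ‖x‖ ^ n :=
          mul_le_mul_of_nonneg_right h1 (by positivity)
      _ ≤ (((4 : ℝ) ^ n) * A ^ (n + 2)) * ‖x‖ ^ n := by
          refine mul_le_mul_of_nonneg_right
            (mul_le_mul ?_ h2 ?_ (by positivity)) (by positivity)
          · exact_mod_cast stmt9_catalan_le n
          · exact le_trans (Real.rpow_nonneg hs0.le _) (le_max_left _ _)
      _ = A ^ 2 * r ^ n := by rw [hr]; ring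
  exact Summable.of_nonneg_of_le (fun n => norm_nonneg _) hcomp
    ((summable_geometric_of_lt_one hr0 hr1).mul_left _)
end

section
/- The specialisations of W at t = −x and t = −x⁻¹ are well defined and constant: (a) for every integer m ≥ 1, ∑_{(n,j) ∈ ℕ×ℤ, n+j=m} (−1)^j·(w_n, t^j) = 0 (the sum has finitely many nonzero terms), i.e. W(−x, x) = 1; (b) for every integer m ≥ 1, ∑_{(n,j) ∈ ℕ×ℤ, n−j=m} (−1)^j·(w_n, t^j) = 0, and for m = 0 this sum equals 0 as well, i.e. W(−x⁻¹, x) = 0. -/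
open LaurentPolynomial

namespace Stmt10Aux

open Finset

lemma s_add (x y : ℤ) : (-1 : ℚ) ^ (x + y) = (-1 : ℚ) ^ x * (-1 : ℚ) ^ y :=
  zpow_add₀ (by norm_num) x y

lemma s_sq (x : ℤ) : (-1 : ℚ) ^ x * (-1 : ℚ) ^ x = 1 := by
  rw [← s_add, ← two_mul, zpow_mul]; norm_num

lemma s_neg (x : ℤ) : (-1 : ℚ) ^ (-x) = (-1 : ℚ) ^ x := by
  rw [zpow_neg]; exact inv_eq_of_mul_eq_one_left (s_sq x)

lemma s_ne (x : ℤ) : (-1 : ℚ) ^ x ≠ 0 := zpow_ne_zero _ (by norm_num)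

lemma s_succ (x : ℤ) : (-1 : ℚ) ^ (x + 1) = -(-1 : ℚ) ^ x := by
  rw [s_add]; ring

lemma mul_apply' (f g : ℚ[T;T⁻¹]) (S : Finset ℤ) (hS : f.coeff.support ⊆ S) (c : ℤ) :
    (f * g).coeff c = ∑ i ∈ S, f.coeff i * g.coeff (c - i) := by
  have h1 : (f * g).coeff c = ∑ i ∈ f.coeff.support, f.coeff i * g.coeff (c - i) := by
    rw [AddMonoidAlgebra.coeff_mul_apply_left, Finsupp.sum]
    refine Finset.sum_congr rfl fun i hi => ?_
    rw [neg_add_eq_sub]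
  rw [h1]
  refine Finset.sum_subset hS fun i _ hi => ?_
  rw [Finsupp.notMem_support_iff.mp hi, zero_mul]

variable (w : ℕ → ℚ[T;T⁻¹])

lemma w0_apply (hw0 : w 0 = 1) (j : ℤ) : (w 0).coeff j = if j = 0 then (1:ℚ) else 0 := by
  rw [hw0, AddMonoidAlgebra.one_def, AddMonoidAlgebra.coeff_single, Finsupp.single_apply]
  simp [eq_comm]

lemma wrec
    (hw : ∀ n : ℕ, w (n + 1) =
      T 1 * ∑ k ∈ Finset.range (n + 1), invert (w k) * invert (w (n - k)))
    (N : ℕ) (c : ℤ) :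
    (w (N + 1)).coeff c = ∑ k ∈ range (N + 1), (w k * w (N - k)).coeff (1 - c) := by
  rw [hw N, show (T 1 : ℚ[T;T⁻¹]) = AddMonoidAlgebra.single (1:ℤ) (1:ℚ) from rfl,
    AddMonoidAlgebra.coeff_single_mul_apply, one_mul, AddMonoidAlgebra.coeff_sum, Finset.sum_apply']
  refine Finset.sum_congr rfl fun k hk => ?_
  rw [← map_mul, invert_apply]
  congr 1
  ring

lemma bound (hw0 : w 0 = 1)
    (hw : ∀ n : ℕ, w (n + 1) =
      T 1 * ∑ k ∈ Finset.range (n + 1), invert (w k) * invert (w (n - k))) :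
    ∀ n : ℕ, ∀ j : ℤ, (w n).coeff j ≠ 0 → -(n:ℤ) ≤ 3*j ∧ 3*j ≤ (n:ℤ)+2 := by
  intro n
  induction n using Nat.strong_induction_on with
  | _ n IH =>
    intro j hj
    match n with
    | 0 =>
      rw [w0_apply w hw0] at hj
      have : j = 0 := by by_contra h; simp [h] at hj
      subst this; norm_num
    | (N+1) =>
      rw [wrec w hw N j] at hj
      obtain ⟨k, hk, hne⟩ := Finset.exists_ne_zero_of_sum_ne_zero hj
      rw [mul_apply' _ _ ((w k).coeff.support) subset_rfl] at hne
      obtain ⟨i, hi, hne2⟩ := Finset.exists_ne_zero_of_sum_ne_zero hne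
      have hkN : k ≤ N := by simpa using Nat.lt_succ_iff.mp (Finset.mem_range.mp hk)
      have h1 := IH k (by omega) i (Finsupp.mem_support_iff.mp hi)
      have h2 := IH (N - k) (by omega) _ (right_ne_zero_of_mul hne2)
      have hc : ((N - k : ℕ) : ℤ) = (N:ℤ) - k := by rw [Nat.cast_sub hkN]
      rw [hc] at h2
      push_cast
      omega

/-- coefficient sum for `W(-x, x)` -/
noncomputable def AA (m : ℕ) : ℚ :=
  ∑ n ∈ range (2*m+1), (-1:ℚ) ^ ((m:ℤ) - n) * (w n).coeff ((m:ℤ) - n)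

/-- coefficient sum for `W(-x⁻¹, x)` -/
noncomputable def BB (m : ℕ) : ℚ :=
  ∑ n ∈ range (2*m+2), (-1:ℚ) ^ ((n:ℤ) - m) * (w n).coeff ((n:ℤ) - m)

section
variable (hb : ∀ n : ℕ, ∀ j : ℤ, (w n).coeff j ≠ 0 → -(n:ℤ) ≤ 3*j ∧ 3*j ≤ (n:ℤ)+2)
include hb

lemma AA_expand (p R : ℕ) (hR : 2*p+1 ≤ R) :
    AA w p = ∑ a ∈ range R, (-1:ℚ) ^ ((p:ℤ) - a) * (w a).coeff ((p:ℤ) - a) := by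
  refine Finset.sum_subset (Finset.range_subset_range.mpr (by omega)) fun a ha hna => ?_
  have h0 : (w a).coeff ((p:ℤ) - a) = 0 := by
    by_contra h
    have := hb a _ h
    simp only [mem_range] at ha hna
    omega
  rw [h0, mul_zero]

lemma BB_expand (p R : ℕ) (hR : 2*p+2 ≤ R) :
    BB w p = ∑ a ∈ range R, (-1:ℚ) ^ ((a:ℤ) - p) * (w a).coeff ((a:ℤ) - p) := by
  refine Finset.sum_subset (Finset.range_subset_range.mpr (by omega)) fun a ha hna => ?_
  have h0 : (w a).coeff ((a:ℤ) - p) = 0 := by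
    by_contra h
    have := hb a _ h
    simp only [mem_range] at ha hna
    omega
  rw [h0, mul_zero]

end


section
variable (hw0 : w 0 = 1)
  (hw : ∀ n : ℕ, w (n + 1) =
      T 1 * ∑ k ∈ Finset.range (n + 1), invert (w k) * invert (w (n - k)))
include hw0 hw

lemma BBeq (m : ℕ) :
    BB w m = (if m = 0 then (1:ℚ) else 0)
      - ∑ x ∈ ((range (2*m+1)).sigma fun N => range (N+1)) ×ˢ
            Finset.Icc (-(2*(m:ℤ)+2)) (2*(m:ℤ)+2),
          (-1:ℚ)^((m:ℤ) - x.1.1) *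
            ((w x.1.2).coeff x.2 * (w (x.1.1 - x.1.2)).coeff ((m:ℤ) - x.1.1 - x.2)) := by
  have hb := bound w hw0 hw
  rw [BB, show 2*m+2 = (2*m+1)+1 from rfl, Finset.sum_range_succ']
  have h0 : (-1:ℚ)^(((0:ℕ):ℤ)-(m:ℤ)) * (w 0).coeff (((0:ℕ):ℤ)-(m:ℤ)) = (if m = 0 then (1:ℚ) else 0) := by
    by_cases hm : m = 0
    · subst hm; simp [w0_apply w hw0]
    · rw [w0_apply w hw0, if_neg (by omega), mul_zero, if_neg hm]
  have hmain : ∑ N ∈ range (2*m+1),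
        (-1:ℚ)^(((N+1:ℕ):ℤ)-(m:ℤ)) * (w (N+1)).coeff (((N+1:ℕ):ℤ)-(m:ℤ))
      = - ∑ x ∈ ((range (2*m+1)).sigma fun N => range (N+1)) ×ˢ
            Finset.Icc (-(2*(m:ℤ)+2)) (2*(m:ℤ)+2),
          (-1:ℚ)^((m:ℤ) - x.1.1) *
            ((w x.1.2).coeff x.2 * (w (x.1.1 - x.1.2)).coeff ((m:ℤ) - x.1.1 - x.2)) := by
    rw [Finset.sum_product, Finset.sum_sigma, ← Finset.sum_neg_distrib]
    refine Finset.sum_congr rfl fun N hN => ?_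
    have hN' : N ≤ 2*m := by simpa [Nat.lt_succ_iff] using hN
    have hNc : ((N+1:ℕ):ℤ) - (m:ℤ) = (N:ℤ)+1-m := by push_cast; ring
    rw [hNc, wrec w hw N ((N:ℤ)+1-m),
      show (1 : ℤ) - ((N:ℤ)+1-m) = (m:ℤ)-N by ring,
      show (-1:ℚ)^((N:ℤ)+1-m) = -(-1:ℚ)^((m:ℤ)-N) by
        rw [show (N:ℤ)+1-m = ((N:ℤ)-m)+1 by ring, s_succ,
          show (N:ℤ)-(m:ℤ) = -((m:ℤ)-N) by ring, s_neg],
      neg_mul, neg_inj, Finset.mul_sum]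
    refine Finset.sum_congr rfl fun k hk => ?_
    have hk' : k ≤ N := by simpa [Nat.lt_succ_iff] using hk
    rw [mul_apply' (w k) (w (N-k)) (Finset.Icc (-(2*(m:ℤ)+2)) (2*(m:ℤ)+2))
      (fun j hj => by
        have := hb k j (Finsupp.mem_support_iff.mp hj)
        simp only [Finset.mem_Icc]
        omega),
      Finset.mul_sum]
  rw [hmain, h0]
  ring

lemma AAeq (M : ℕ) :
    AA w (M+1) = ∑ x ∈ ((range (2*M+2)).sigma fun N => range (N+1)) ×ˢ
          Finset.Icc (-(2*(M:ℤ)+3)) (2*(M:ℤ)+3),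
        (-1:ℚ)^((M:ℤ) - x.1.1) *
          ((w x.1.2).coeff x.2 * (w (x.1.1 - x.1.2)).coeff ((x.1.1:ℤ) + 1 - M - x.2)) := by
  have hb := bound w hw0 hw
  rw [AA, show 2*(M+1)+1 = (2*M+2)+1 from rfl, Finset.sum_range_succ']
  have h0 : (-1:ℚ)^(((M+1:ℕ):ℤ)-((0:ℕ):ℤ)) * (w 0).coeff (((M+1:ℕ):ℤ)-((0:ℕ):ℤ)) = 0 := by
    rw [w0_apply w hw0, if_neg (by omega), mul_zero]
  have hmain : ∑ N ∈ range (2*M+2),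
        (-1:ℚ)^(((M+1:ℕ):ℤ)-((N+1:ℕ):ℤ)) * (w (N+1)).coeff (((M+1:ℕ):ℤ)-((N+1:ℕ):ℤ))
      = ∑ x ∈ ((range (2*M+2)).sigma fun N => range (N+1)) ×ˢ
            Finset.Icc (-(2*(M:ℤ)+3)) (2*(M:ℤ)+3),
          (-1:ℚ)^((M:ℤ) - x.1.1) *
            ((w x.1.2).coeff x.2 * (w (x.1.1 - x.1.2)).coeff ((x.1.1:ℤ) + 1 - M - x.2)) := by
    rw [Finset.sum_product, Finset.sum_sigma]
    refine Finset.sum_congr rfl fun N hN => ?_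
    have hN' : N ≤ 2*M+1 := by simpa [Nat.lt_succ_iff] using hN
    have hNc : ((M+1:ℕ):ℤ) - ((N+1:ℕ):ℤ) = (M:ℤ)-N := by push_cast; ring
    rw [hNc, wrec w hw N ((M:ℤ)-N),
      show (1 : ℤ) - ((M:ℤ)-N) = (N:ℤ)+1-M by ring, Finset.mul_sum]
    refine Finset.sum_congr rfl fun k hk => ?_
    have hk' : k ≤ N := by simpa [Nat.lt_succ_iff] using hk
    rw [mul_apply' (w k) (w (N-k)) (Finset.Icc (-(2*(M:ℤ)+3)) (2*(M:ℤ)+3))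
      (fun j hj => by
        have := hb k j (Finsupp.mem_support_iff.mp hj)
        simp only [Finset.mem_Icc]
        omega),
      Finset.mul_sum]
  rw [hmain, h0, add_zero]

end


lemma conv2 (hb : ∀ n : ℕ, ∀ j : ℤ, (w n).coeff j ≠ 0 → -(n:ℤ) ≤ 3*j ∧ 3*j ≤ (n:ℤ)+2) (m : ℕ) :
    ∑ x ∈ ((range (2*m+1)).sigma fun N => range (N+1)) ×ˢ
        Finset.Icc (-(2*(m:ℤ)+2)) (2*(m:ℤ)+2),
      (-1:ℚ)^((m:ℤ) - x.1.1) * ((w x.1.2).coeff x.2 * (w (x.1.1 - x.1.2)).coeff ((m:ℤ) - x.1.1 - x.2))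
    = ∑ y ∈ range (m+1) ×ˢ (range (2*m+1) ×ˢ range (2*m+1)),
      (-1:ℚ)^((m:ℤ) - y.2.1 - y.2.2) *
        ((w y.2.1).coeff ((y.1:ℤ) - y.2.1) * (w y.2.2).coeff ((m:ℤ) - y.1 - y.2.2)) := by
  classical
  conv_lhs => rw [← Finset.sum_filter_ne_zero]
  conv_rhs => rw [← Finset.sum_filter_ne_zero]
  refine Finset.sum_nbij'
    (fun x => ((((x.1.2:ℤ) + x.2).toNat, x.1.2, x.1.1 - x.1.2) : ℕ × ℕ × ℕ))
    (fun y => ((⟨y.2.1 + y.2.2, y.2.1⟩, (y.1:ℤ) - y.2.1) : (Σ _ : ℕ, ℕ) × ℤ))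
    ?_ ?_ ?_ ?_ ?_
  · -- hi : maps into target
    rintro ⟨⟨N, k⟩, i⟩ hx
    simp only [Finset.mem_filter, Finset.mem_product, Finset.mem_sigma, Finset.mem_range,
      Finset.mem_Icc] at hx
    obtain ⟨⟨⟨hN, hk⟩, hi⟩, hne⟩ := hx
    have huv := right_ne_zero_of_mul hne
    have hu := left_ne_zero_of_mul huv
    have hv := right_ne_zero_of_mul huv
    have b1 := hb k i hu
    have b2 := hb (N-k) _ hv
    have e0 : (0:ℤ) ≤ (k:ℤ) + i := by omega
    simp only [Finset.mem_filter, Finset.mem_product, Finset.mem_range]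
    refine ⟨⟨by omega, by omega, by omega⟩, ?_⟩
    rw [Int.toNat_of_nonneg e0,
      show (m:ℤ) - (k:ℤ) - ((N-k : ℕ):ℤ) = (m:ℤ) - N by omega,
      show (k:ℤ) + i - (k:ℤ) = i by ring,
      show (m:ℤ) - ((k:ℤ) + i) - ((N-k : ℕ):ℤ) = (m:ℤ) - N - i by omega]
    exact hne
  · -- hj : inverse maps into source
    rintro ⟨p, a, b⟩ hy
    simp only [Finset.mem_filter, Finset.mem_product, Finset.mem_range] at hy
    obtain ⟨⟨hp, ha, hb'⟩, hne⟩ := hy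
    have huv := right_ne_zero_of_mul hne
    have hu := left_ne_zero_of_mul huv
    have hv := right_ne_zero_of_mul huv
    have b1 := hb a _ hu
    have b2 := hb b _ hv
    simp only [Finset.mem_filter, Finset.mem_product, Finset.mem_sigma, Finset.mem_range,
      Finset.mem_Icc]
    refine ⟨⟨⟨by omega, by omega⟩, by omega, by omega⟩, ?_⟩
    rw [show (a + b) - a = b from by omega,
      show ((a + b : ℕ):ℤ) = (a:ℤ) + b by push_cast; ring,
      show (m:ℤ) - ((a:ℤ)+b) - ((p:ℤ)-a) = (m:ℤ) - p - b by ring,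
      show (m:ℤ) - ((a:ℤ)+b) = (m:ℤ) - a - b by ring]
    exact hne
  · -- left_inv
    rintro ⟨⟨N, k⟩, i⟩ hx
    simp only [Finset.mem_filter, Finset.mem_product, Finset.mem_sigma, Finset.mem_range,
      Finset.mem_Icc] at hx
    obtain ⟨⟨⟨hN, hk⟩, hi⟩, hne⟩ := hx
    have huv := right_ne_zero_of_mul hne
    have hu := left_ne_zero_of_mul huv
    have b1 := hb k i hu
    have h1 : k + (N-k) = N := by omega
    have h2 : ((((k:ℤ)+i).toNat:ℕ):ℤ) - (k:ℤ) = i := by omega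
    simp only [h1, h2]
  · -- right_inv
    rintro ⟨p, a, b⟩ hy
    have h1 : ((a:ℤ) + ((p:ℤ) - a)).toNat = p := by omega
    have h2 : (a+b) - a = b := by omega
    simp only [h1, h2]
  · -- values agree
    rintro ⟨⟨N, k⟩, i⟩ hx
    simp only [Finset.mem_filter, Finset.mem_product, Finset.mem_sigma, Finset.mem_range,
      Finset.mem_Icc] at hx
    obtain ⟨⟨⟨hN, hk⟩, hi⟩, hne⟩ := hx
    have huv := right_ne_zero_of_mul hne
    have hu := left_ne_zero_of_mul huv
    have hv := right_ne_zero_of_mul huv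
    have b1 := hb k i hu
    have b2 := hb (N-k) _ hv
    have e0 : (0:ℤ) ≤ (k:ℤ) + i := by omega
    rw [Int.toNat_of_nonneg e0,
      show (m:ℤ) - (k:ℤ) - ((N-k : ℕ):ℤ) = (m:ℤ) - N by omega,
      show (k:ℤ) + i - (k:ℤ) = i by ring,
      show (m:ℤ) - ((k:ℤ) + i) - ((N-k : ℕ):ℤ) = (m:ℤ) - N - i by omega]


lemma conv1 (hb : ∀ n : ℕ, ∀ j : ℤ, (w n).coeff j ≠ 0 → -(n:ℤ) ≤ 3*j ∧ 3*j ≤ (n:ℤ)+2) (M : ℕ) :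
    ∑ x ∈ ((range (2*M+2)).sigma fun N => range (N+1)) ×ˢ
        Finset.Icc (-(2*(M:ℤ)+3)) (2*(M:ℤ)+3),
      (-1:ℚ)^((M:ℤ) - x.1.1) * ((w x.1.2).coeff x.2 * (w (x.1.1 - x.1.2)).coeff ((x.1.1:ℤ) + 1 - M - x.2))
    = ∑ y ∈ range M ×ˢ (range (2*M+2) ×ˢ range (2*M+2)),
      (-1:ℚ)^((y.2.1:ℤ) + y.2.2 - M) *
        ((w y.2.1).coeff ((y.2.1:ℤ) - y.1) * (w y.2.2).coeff ((y.2.2:ℤ) - ((M:ℤ) - 1 - y.1))) := by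
  classical
  conv_lhs => rw [← Finset.sum_filter_ne_zero]
  conv_rhs => rw [← Finset.sum_filter_ne_zero]
  refine Finset.sum_nbij'
    (fun x => ((((x.1.2:ℤ) - x.2).toNat, x.1.2, x.1.1 - x.1.2) : ℕ × ℕ × ℕ))
    (fun y => ((⟨y.2.1 + y.2.2, y.2.1⟩, (y.2.1:ℤ) - y.1) : (Σ _ : ℕ, ℕ) × ℤ))
    ?_ ?_ ?_ ?_ ?_
  · rintro ⟨⟨N, k⟩, i⟩ hx
    simp only [Finset.mem_filter, Finset.mem_product, Finset.mem_sigma, Finset.mem_range,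
      Finset.mem_Icc] at hx
    obtain ⟨⟨⟨hN, hk⟩, hi⟩, hne⟩ := hx
    have huv := right_ne_zero_of_mul hne
    have hu := left_ne_zero_of_mul huv
    have hv := right_ne_zero_of_mul huv
    have b1 := hb k i hu
    have b2 := hb (N-k) _ hv
    have e0 : (0:ℤ) ≤ (k:ℤ) - i := by omega
    simp only [Finset.mem_filter, Finset.mem_product, Finset.mem_range]
    refine ⟨⟨by omega, by omega, by omega⟩, ?_⟩
    rw [Int.toNat_of_nonneg e0,
      show (k:ℤ) + ((N-k:ℕ):ℤ) - M = -((M:ℤ) - N) by omega,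
      s_neg,
      show (k:ℤ) - ((k:ℤ) - i) = i by ring,
      show ((N-k:ℕ):ℤ) - ((M:ℤ) - 1 - ((k:ℤ) - i)) = (N:ℤ) + 1 - M - i by omega]
    exact hne
  · rintro ⟨p, a, b⟩ hy
    simp only [Finset.mem_filter, Finset.mem_product, Finset.mem_range] at hy
    obtain ⟨⟨hp, ha, hb'⟩, hne⟩ := hy
    have huv := right_ne_zero_of_mul hne
    have hu := left_ne_zero_of_mul huv
    have hv := right_ne_zero_of_mul huv
    have b1 := hb a _ hu
    have b2 := hb b _ hv
    simp only [Finset.mem_filter, Finset.mem_product, Finset.mem_sigma, Finset.mem_range,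
      Finset.mem_Icc]
    refine ⟨⟨⟨by omega, by omega⟩, by omega, by omega⟩, ?_⟩
    rw [show (a + b) - a = b from by omega,
      show ((a + b : ℕ):ℤ) = (a:ℤ) + b by push_cast; ring,
      show (a:ℤ) + b + 1 - M - ((a:ℤ) - p) = (b:ℤ) - ((M:ℤ) - 1 - p) by ring,
      show (M:ℤ) - ((a:ℤ) + b) = -((a:ℤ) + b - M) by ring,
      s_neg]
    exact hne
  · rintro ⟨⟨N, k⟩, i⟩ hx
    simp only [Finset.mem_filter, Finset.mem_product, Finset.mem_sigma, Finset.mem_range,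
      Finset.mem_Icc] at hx
    obtain ⟨⟨⟨hN, hk⟩, hi⟩, hne⟩ := hx
    have huv := right_ne_zero_of_mul hne
    have hu := left_ne_zero_of_mul huv
    have b1 := hb k i hu
    have h1 : k + (N-k) = N := by omega
    have h2 : (k:ℤ) - ((((k:ℤ)-i).toNat:ℕ):ℤ) = i := by omega
    simp only [h1, h2]
  · rintro ⟨p, a, b⟩ hy
    have h1 : ((a:ℤ) - ((a:ℤ) - p)).toNat = p := by omega
    have h2 : (a+b) - a = b := by omega
    simp only [h1, h2]
  · rintro ⟨⟨N, k⟩, i⟩ hx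
    simp only [Finset.mem_filter, Finset.mem_product, Finset.mem_sigma, Finset.mem_range,
      Finset.mem_Icc] at hx
    obtain ⟨⟨⟨hN, hk⟩, hi⟩, hne⟩ := hx
    have huv := right_ne_zero_of_mul hne
    have hu := left_ne_zero_of_mul huv
    have hv := right_ne_zero_of_mul huv
    have b1 := hb k i hu
    have b2 := hb (N-k) _ hv
    have e0 : (0:ℤ) ≤ (k:ℤ) - i := by omega
    rw [Int.toNat_of_nonneg e0,
      show (k:ℤ) + ((N-k:ℕ):ℤ) - M = -((M:ℤ) - N) by omega,
      s_neg,
      show (k:ℤ) - ((k:ℤ) - i) = i by ring,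
      show ((N-k:ℕ):ℤ) - ((M:ℤ) - 1 - ((k:ℤ) - i)) = (N:ℤ) + 1 - M - i by omega]

section
variable (hw0 : w 0 = 1)
  (hw : ∀ n : ℕ, w (n + 1) =
      T 1 * ∑ k ∈ Finset.range (n + 1), invert (w k) * invert (w (n - k)))
include hw0 hw

lemma E2 (m : ℕ) :
    BB w m = (if m = 0 then (1:ℚ) else 0) - ∑ p ∈ range (m+1), AA w p * AA w (m-p) := by
  have hb := bound w hw0 hw
  rw [BBeq w hw0 hw m, conv2 w hb m]
  congr 1
  rw [Finset.sum_product]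
  refine Finset.sum_congr rfl fun p hp => ?_
  have hp' : p ≤ m := by simpa [Nat.lt_succ_iff] using hp
  rw [Finset.sum_product,
    AA_expand w hb p (2*m+1) (by omega), AA_expand w hb (m-p) (2*m+1) (by omega),
    Finset.sum_mul_sum]
  refine Finset.sum_congr rfl fun a ha => Finset.sum_congr rfl fun b hb' => ?_
  have hc : ((m-p:ℕ):ℤ) = (m:ℤ) - p := by omega
  rw [hc, show (m:ℤ) - a - b = ((p:ℤ) - a) + ((m:ℤ) - p - b) by ring, s_add]
  ring

lemma E1 (M : ℕ) :
    AA w (M+1) = - ∑ p ∈ range M, BB w p * BB w (M-1-p) := by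
  have hb := bound w hw0 hw
  rw [AAeq w hw0 hw M, conv1 w hb M, ← Finset.sum_neg_distrib, Finset.sum_product]
  refine Finset.sum_congr rfl fun p hp => ?_
  have hp' : p < M := mem_range.mp hp
  rw [Finset.sum_product,
    BB_expand w hb p (2*M+2) (by omega), BB_expand w hb (M-1-p) (2*M+2) (by omega),
    Finset.sum_mul_sum, ← Finset.sum_neg_distrib]
  refine Finset.sum_congr rfl fun a ha => ?_
  rw [← Finset.sum_neg_distrib]
  refine Finset.sum_congr rfl fun b hb' => ?_
  have hc : ((M-1-p:ℕ):ℤ) = (M:ℤ) - 1 - p := by omega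
  have hs : (-1:ℚ)^((a:ℤ) - p) * (-1:ℚ)^((b:ℤ) - ((M:ℤ) - 1 - p)) = -(-1:ℚ)^((a:ℤ) + b - M) := by
    rw [← s_add, show ((a:ℤ) - p) + ((b:ℤ) - ((M:ℤ) - 1 - p)) = ((a:ℤ) + b - M) + 1 by ring,
      s_succ]
  rw [hc, mul_mul_mul_comm, hs]
  ring

omit hw in
lemma AA0 : AA w 0 = 1 := by
  simp [AA, w0_apply w hw0]

lemma main : ∀ m : ℕ, AA w m = (if m = 0 then (1:ℚ) else 0) ∧ BB w m = 0 := by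
  intro m
  induction m using Nat.strong_induction_on with
  | _ m IH =>
    have hA : AA w m = (if m = 0 then (1:ℚ) else 0) := by
      cases m with
      | zero => rw [AA0 w hw0]; simp
      | succ M =>
        rw [E1 w hw0 hw M, if_neg (Nat.succ_ne_zero M), Finset.sum_eq_zero, neg_zero]
        intro p hp
        rw [(IH p (by have := mem_range.mp hp; omega)).2, zero_mul]
    refine ⟨hA, ?_⟩
    have hsum : ∑ p ∈ range (m+1), AA w p * AA w (m-p) = (if m = 0 then (1:ℚ) else 0) := by
      cases m with
      | zero => simp [AA0 w hw0]
      | succ M =>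
        rw [if_neg (Nat.succ_ne_zero M)]
        refine Finset.sum_eq_zero fun p hp => ?_
        have hpM : p ≤ M + 1 := by have := mem_range.mp hp; omega
        rcases Nat.eq_or_lt_of_le hpM with h | h
        · rw [h, hA, if_neg (Nat.succ_ne_zero M), zero_mul]
        · by_cases hp0 : p = 0
          · subst hp0
            rw [Nat.sub_zero, hA, if_neg (Nat.succ_ne_zero M), mul_zero]
          · rw [(IH p h).1, if_neg hp0, zero_mul]
    rw [E2 w hw0 hw m, hsum]
    ring

end

end Stmt10Aux

open Stmt10Aux in
/-- For the Laurent polynomials `w n` defined by `w 0 = 1` and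
`(w (n+1)).coeff (t) = t * ∑_{k=0}^{n} (w k).coeff (t⁻¹) * (w (n-k)).coeff (t⁻¹)`, the specialisations of
`W = ∑ w_n(t) x^n` at `t = −x` and `t = −x⁻¹` are well defined and constant:
(a) for each `m ≥ 1` the (finitely supported) sum over pairs `(n,j)` with `n+j = m` of
`(−1)^j (w_n,t^j)` vanishes, i.e. `W(−x,x) = 1`; (b) for each `m ≥ 0` the sum over pairs
`(n,j)` with `n−j = m` of `(−1)^j (w_n,t^j)` vanishes, i.e. `W(−x⁻¹,x) = 0`. -/
theorem stmt10 (w : ℕ → ℚ[T;T⁻¹])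
    (hw0 : w 0 = 1)
    (hw : ∀ n : ℕ, w (n + 1) =
      T 1 * ∑ k ∈ Finset.range (n + 1), invert (w k) * invert (w (n - k))) :
    (∀ m : ℕ,
      (Function.support fun n : ℕ =>
        (-1 : ℚ) ^ ((m : ℤ) - n) * (w n).coeff ((m : ℤ) - n)).Finite ∧
      (1 ≤ m → ∑ᶠ n : ℕ, (-1 : ℚ) ^ ((m : ℤ) - n) * (w n).coeff ((m : ℤ) - n) = 0)) ∧
    (∀ m : ℕ,
      (Function.support fun n : ℕ =>
        (-1 : ℚ) ^ ((n : ℤ) - m) * (w n).coeff ((n : ℤ) - m)).Finite ∧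
      ∑ᶠ n : ℕ, (-1 : ℚ) ^ ((n : ℤ) - m) * (w n).coeff ((n : ℤ) - m) = 0) := by
  have hb := bound w hw0 hw
  have hmain := main w hw0 hw
  constructor
  · intro m
    have hsupp : (Function.support fun n : ℕ =>
        (-1 : ℚ) ^ ((m : ℤ) - n) * (w n).coeff ((m : ℤ) - n)) ⊆ ↑(Finset.range (2*m+1)) := by
      intro n hn
      simp only [Function.mem_support] at hn
      simp only [Finset.coe_range, Set.mem_Iio]
      by_contra h
      have h2 : (w n).coeff ((m:ℤ) - n) = 0 := by
        by_contra h3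
        have := hb n _ h3
        omega
      rw [h2, mul_zero] at hn
      exact hn rfl
    refine ⟨Set.Finite.subset (Finset.finite_toSet _) hsupp, fun hm => ?_⟩
    rw [finsum_eq_finset_sum_of_support_subset _ hsupp]
    have h := (hmain m).1
    rw [if_neg (by omega)] at h
    exact h
  · intro m
    have hsupp : (Function.support fun n : ℕ =>
        (-1 : ℚ) ^ ((n : ℤ) - m) * (w n).coeff ((n : ℤ) - m)) ⊆ ↑(Finset.range (2*m+2)) := by
      intro n hn
      simp only [Function.mem_support] at hn
      simp only [Finset.coe_range, Set.mem_Iio]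
      by_contra h
      have h2 : (w n).coeff ((n:ℤ) - m) = 0 := by
        by_contra h3
        have := hb n _ h3
        omega
      rw [h2, mul_zero] at hn
      exact hn rfl
    refine ⟨Set.Finite.subset (Finset.finite_toSet _) hsupp, ?_⟩
    rw [finsum_eq_finset_sum_of_support_subset _ hsupp]
    exact (hmain m).2
end

section
/- The algebraic equation t(1+tx) − tW + 2tx²W² + x³W⁴ = 0 has exactly one solution W in the ring R = (ℚ[t,t⁻¹])[[x]] of formal power series in x with coefficients in ℚ[t,t⁻¹]; this solution satisfies W ≡ 1 + tx (mod x²). -/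
open LaurentPolynomial PowerSeries

noncomputable section Stmt11Aux

/-- The contraction map whose fixed point solves the equation. -/
noncomputable def stmt11F (A : (ℚ[T;T⁻¹])⟦X⟧) : (ℚ[T;T⁻¹])⟦X⟧ :=
  1 + PowerSeries.C (T 1) * PowerSeries.X
    + 2 * PowerSeries.X ^ 2 * A ^ 2
    + PowerSeries.C (T (-1)) * PowerSeries.X ^ 3 * A ^ 4

lemma stmt11F_contract {A B : (ℚ[T;T⁻¹])⟦X⟧} {m : ℕ}
    (h : (PowerSeries.X : (ℚ[T;T⁻¹])⟦X⟧) ^ m ∣ A - B) :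
    (PowerSeries.X : (ℚ[T;T⁻¹])⟦X⟧) ^ (m + 2) ∣ stmt11F A - stmt11F B := by
  obtain ⟨c, hc⟩ := h
  refine ⟨c * (2 * (A + B) + PowerSeries.C (T (-1)) * PowerSeries.X * (A + B) *
    (A ^ 2 + B ^ 2)), ?_⟩
  have : A - B = PowerSeries.X ^ m * c := hc
  unfold stmt11F
  rw [pow_add]
  linear_combination (2 * PowerSeries.X ^ 2 * (A + B) +
      PowerSeries.C (T (-1)) * PowerSeries.X ^ 3 * (A + B) * (A ^ 2 + B ^ 2)) * this

noncomputable def stmt11Seq : ℕ → (ℚ[T;T⁻¹])⟦X⟧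
  | 0 => 0
  | k + 1 => stmt11F (stmt11Seq k)

lemma stmt11Seq_step (k : ℕ) :
    (PowerSeries.X : (ℚ[T;T⁻¹])⟦X⟧) ^ (2 * k) ∣ stmt11Seq (k + 1) - stmt11Seq k := by
  induction k with
  | zero => simpa using one_dvd _
  | succ k ih =>
      have h := stmt11F_contract ih
      have : 2 * (k + 1) = 2 * k + 2 := by ring
      rw [this]
      exact h

lemma stmt11Seq_stab (k l : ℕ) :
    (PowerSeries.X : (ℚ[T;T⁻¹])⟦X⟧) ^ (2 * k) ∣ stmt11Seq (k + l) - stmt11Seq k := by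
  induction l with
  | zero => simp
  | succ l ih =>
      have h1 : (PowerSeries.X : (ℚ[T;T⁻¹])⟦X⟧) ^ (2 * k) ∣
          stmt11Seq (k + l + 1) - stmt11Seq (k + l) :=
        dvd_trans (pow_dvd_pow _ (by omega)) (stmt11Seq_step (k + l))
      have := dvd_add h1 ih
      simpa [show k + (l + 1) = k + l + 1 by ring, sub_add_sub_cancel] using this

lemma stmt11Seq_coeff_stab {n k k' : ℕ} (hk : n < 2 * k) (hkk : k ≤ k') :
    PowerSeries.coeff n (stmt11Seq k') = PowerSeries.coeff n (stmt11Seq k) := by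
  obtain ⟨l, rfl⟩ := Nat.exists_eq_add_of_le hkk
  have h := (PowerSeries.X_pow_dvd_iff.mp (stmt11Seq_stab k l)) n hk
  rw [map_sub] at h
  exact sub_eq_zero.mp h

noncomputable def stmt11W : (ℚ[T;T⁻¹])⟦X⟧ :=
  PowerSeries.mk fun n => PowerSeries.coeff n (stmt11Seq (n + 1))

lemma stmt11W_coeff {n k : ℕ} (h : n < 2 * k) :
    PowerSeries.coeff n stmt11W = PowerSeries.coeff n (stmt11Seq k) := by
  have h1 : PowerSeries.coeff n stmt11W
      = PowerSeries.coeff n (stmt11Seq (n + 1)) := by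
    simp [stmt11W]
  rw [h1]
  rcases le_total k (n + 1) with hle | hle
  · rw [stmt11Seq_coeff_stab h hle]
  · rw [← stmt11Seq_coeff_stab (show n < 2 * (n + 1) by omega) hle]

lemma stmt11W_dvd (k : ℕ) :
    (PowerSeries.X : (ℚ[T;T⁻¹])⟦X⟧) ^ (2 * k) ∣ stmt11W - stmt11Seq k := by
  refine PowerSeries.X_pow_dvd_iff.mpr fun m hm => ?_
  rw [map_sub, stmt11W_coeff hm, sub_self]

lemma stmt11W_fixed : stmt11W = stmt11F stmt11W := by
  ext n
  have h1 : PowerSeries.coeff n stmt11W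
      = PowerSeries.coeff n (stmt11Seq (n + 2)) :=
    stmt11W_coeff (by omega)
  have h2 : (PowerSeries.X : (ℚ[T;T⁻¹])⟦X⟧) ^ (2 * (n + 1) + 2) ∣
      stmt11F stmt11W - stmt11F (stmt11Seq (n + 1)) :=
    stmt11F_contract (stmt11W_dvd (n + 1))
  have h3 := (PowerSeries.X_pow_dvd_iff.mp h2) n (by omega)
  rw [map_sub, sub_eq_zero] at h3
  rw [h1, show stmt11Seq (n + 2) = stmt11F (stmt11Seq (n + 1)) from rfl, ← h3]

lemma stmt11_TT :
    (PowerSeries.C (T 1 : ℚ[T;T⁻¹])) * (PowerSeries.C (T (-1) : ℚ[T;T⁻¹])) = 1 := by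
  rw [← map_mul, ← T_add]
  norm_num

end Stmt11Aux

/-- The algebraic equation `t(1+tx) − tW + 2tx²W² + x³W⁴ = 0` has
exactly one solution `W` in `R = (ℚ[t,t⁻¹])[[x]]`, and this solution satisfies
`W ≡ 1 + tx (mod x²)`. -/
theorem stmt11 :
    ∃ W : (ℚ[T;T⁻¹])⟦X⟧,
      (PowerSeries.C (T 1) * (1 + PowerSeries.C (T 1) * PowerSeries.X)
        - PowerSeries.C (T 1) * W
        + 2 * PowerSeries.C (T 1) * PowerSeries.X ^ 2 * W ^ 2
        + PowerSeries.X ^ 3 * W ^ 4 = 0) ∧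
      PowerSeries.coeff 0 W = 1 ∧
      PowerSeries.coeff 1 W = T 1 ∧
      ∀ W' : (ℚ[T;T⁻¹])⟦X⟧,
        (PowerSeries.C (T 1) * (1 + PowerSeries.C (T 1) * PowerSeries.X)
          - PowerSeries.C (T 1) * W'
          + 2 * PowerSeries.C (T 1) * PowerSeries.X ^ 2 * W' ^ 2
          + PowerSeries.X ^ 3 * W' ^ 4 = 0) → W' = W := by
  refine ⟨stmt11W, ?_, ?_, ?_, ?_⟩
  · have hfix := stmt11W_fixed
    unfold stmt11F at hfix
    linear_combination (-(PowerSeries.C (T 1))) * hfix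
      - PowerSeries.X ^ 3 * stmt11W ^ 4 * stmt11_TT
  · have hfix := stmt11W_fixed
    have htail : ∀ n < 2, PowerSeries.coeff n
        (2 * PowerSeries.X ^ 2 * stmt11W ^ 2
          + PowerSeries.C (T (-1)) * PowerSeries.X ^ 3 * stmt11W ^ 4) = 0 :=
      PowerSeries.X_pow_dvd_iff.mp ⟨2 * stmt11W ^ 2 +
        PowerSeries.C (T (-1)) * PowerSeries.X * stmt11W ^ 4, by ring⟩
    calc PowerSeries.coeff 0 stmt11W
        = PowerSeries.coeff 0 (stmt11F stmt11W) := by rw [← hfix]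
      _ = 1 := by
          unfold stmt11F
          rw [add_assoc, add_assoc, map_add, map_add, ← add_assoc, htail 0 (by norm_num)]
          simp
  · have hfix := stmt11W_fixed
    have htail : ∀ n < 2, PowerSeries.coeff n
        (2 * PowerSeries.X ^ 2 * stmt11W ^ 2
          + PowerSeries.C (T (-1)) * PowerSeries.X ^ 3 * stmt11W ^ 4) = 0 :=
      PowerSeries.X_pow_dvd_iff.mp ⟨2 * stmt11W ^ 2 +
        PowerSeries.C (T (-1)) * PowerSeries.X * stmt11W ^ 4, by ring⟩
    calc PowerSeries.coeff 1 stmt11W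
        = PowerSeries.coeff 1 (stmt11F stmt11W) := by rw [← hfix]
      _ = T 1 := by
          unfold stmt11F
          rw [add_assoc, add_assoc, map_add, map_add, ← add_assoc, htail 1 (by norm_num)]
          simp
  · intro W' hW'
    have hz : PowerSeries.C (T 1) * (stmt11F W' - W') = 0 := by
      unfold stmt11F
      linear_combination hW' + PowerSeries.X ^ 3 * W' ^ 4 * stmt11_TT
    have hfix' : W' = stmt11F W' := by
      have h0 : stmt11F W' - W' = 0 := by
        calc stmt11F W' - W'
            = (PowerSeries.C (T (-1))) *
              (PowerSeries.C (T 1) * (stmt11F W' - W')) := by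
                rw [← mul_assoc, mul_comm (PowerSeries.C (T (-1))), stmt11_TT, one_mul]
          _ = 0 := by rw [hz, mul_zero]
      exact (sub_eq_zero.mp h0).symm
    have hdvd : ∀ k : ℕ, (PowerSeries.X : (ℚ[T;T⁻¹])⟦X⟧) ^ (2 * k) ∣ W' - stmt11W := by
      intro k
      induction k with
      | zero => simpa using one_dvd _
      | succ k ih =>
          have h := stmt11F_contract ih
          rw [← hfix', ← stmt11W_fixed] at h
          have : 2 * (k + 1) = 2 * k + 2 := by ring
          rw [this]
          exact h
    have : W' - stmt11W = 0 := by
      refine PowerSeries.ext fun n => ?_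
      have := (PowerSeries.X_pow_dvd_iff.mp (hdvd (n + 1))) n (by omega)
      simpa using this
    exact sub_eq_zero.mp this
end

section
/- Let d ≥ 2 be an integer and let g ∈ ℚ[[x]] be the unique formal power series satisfying g = 1 + x·g^d. Then for every n ∈ ℕ the coefficient of x^n in g equals binom(dn, n)/((d−1)n+1). (Combinatorially, this coefficient is the number of d-dissections of a strictly convex polygon with (d−1)n+2 vertices into n polygons with d+1 vertices each.) -/
open PowerSeries Finset

lemma natsum (k m p : ℕ) (hk : 1 ≤ k) :
    ∑ a ∈ Finset.range (p+1), k.choose (a+1) * (a+1) * m.choose (p - a)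
      = k * ((k-1)+m).choose p := by
  rw [Nat.add_choose_eq, Finset.Nat.sum_antidiagonal_eq_sum_range_succ_mk,
    Finset.mul_sum]
  refine Finset.sum_congr rfl fun a _ => ?_
  have h := Nat.add_one_mul_choose_eq (k-1) a
  rw [Nat.sub_add_cancel hk] at h
  rw [← h]
  ring

lemma keylemma (d : ℕ) (hd : 2 ≤ d) (g : ℚ⟦X⟧)
    (hg : g = 1 + PowerSeries.X * g ^ d) :
    ∀ n k : ℕ, 1 ≤ k →
      PowerSeries.coeff n (g ^ k)
        = (k * ((d*n+k).choose n) : ℚ) / (d*n+k) := by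
  have hc : PowerSeries.constantCoeff g = 1 := by
    have := congrArg (PowerSeries.constantCoeff) hg
    simpa using this
  intro n
  induction n using Nat.strong_induction_on with
  | _ n IH =>
    intro k hk
    rcases Nat.eq_zero_or_pos n with rfl | hn
    · have hk0 : (k : ℚ) ≠ 0 := by positivity
      simp [PowerSeries.coeff_zero_eq_constantCoeff, map_pow, hc, hk0]
    set F : ℕ → ℚ := fun j => (k.choose j : ℚ) *
      (if 1 ≤ j ∧ j ≤ n then (d*j : ℚ) * (((d*n).choose (n-j)) : ℚ) / (d*n) else 0) with hF
    have hdn0 : ((d:ℚ) * n) ≠ 0 := by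
      have : (0:ℚ) < d * n := by
        have h1 : (0:ℚ) < d := by exact_mod_cast (by omega : 0 < d)
        have h2 : (0:ℚ) < n := by exact_mod_cast hn
        positivity
      exact ne_of_gt this
    have h1 : PowerSeries.coeff n (g ^ k)
        = ∑ j ∈ Finset.range (k+1),
            (k.choose j : ℚ) * (if j ≤ n then PowerSeries.coeff (n-j) (g ^ (d*j)) else 0) := by
      conv_lhs => rw [hg, add_comm]
      rw [add_pow, map_sum]
      refine Finset.sum_congr rfl fun j _ => ?_
      rw [mul_pow, one_pow, mul_one, ← pow_mul]
      have hcast : ((k.choose j : ℕ) : ℚ⟦X⟧) = PowerSeries.C (k.choose j : ℚ) := by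
        simp [map_natCast]
      rw [hcast, PowerSeries.coeff_mul_C, PowerSeries.coeff_X_pow_mul']
      ring
    have h2 : PowerSeries.coeff n (g ^ k) = ∑ j ∈ Finset.range (k+1), F j := by
      rw [h1]
      refine Finset.sum_congr rfl fun j _ => ?_
      rcases Nat.eq_zero_or_pos j with rfl | hj
      · simp [hF, hn.ne']
      by_cases hjn : j ≤ n
      · have hlt : n - j < n := by omega
        have hdj : 1 ≤ d * j := Nat.mul_pos (by omega) hj
        rw [IH (n-j) hlt (d*j) hdj]
        simp only [hF]
        rw [if_pos hjn, if_pos (show 1 ≤ j ∧ j ≤ n from ⟨hj, hjn⟩)]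
        have hrw : d * (n-j) + d * j = d * n := by
          rw [← Nat.mul_add, Nat.sub_add_cancel hjn]
        rw [hrw]
        have hden : ((d:ℚ) * ((n:ℚ)-(j:ℚ)) + ((d*j : ℕ):ℚ)) = (d:ℚ) * n := by
          push_cast; ring
        rw [Nat.cast_sub hjn, hden]
        push_cast; ring
      · simp only [hF]
        rw [if_neg hjn, if_neg (by omega : ¬ (1 ≤ j ∧ j ≤ n))]
    have hFz1 : ∀ j, k < j → F j = 0 := fun j hj => by
      simp [hF, Nat.choose_eq_zero_of_lt hj]
    have hFz2 : ∀ j, n < j → F j = 0 := fun j hj => by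
      have hnot : ¬ (1 ≤ j ∧ j ≤ n) := by omega
      simp [hF, hnot]
    have h3 : ∑ j ∈ Finset.range (k+1), F j = ∑ j ∈ Finset.range (n+1), F j := by
      have e1 : ∑ j ∈ Finset.range (k+1), F j = ∑ j ∈ Finset.range (k+n+1), F j :=
        Finset.sum_subset (Finset.range_subset_range.2 (by omega))
          (fun j _ hj' => hFz1 j (by simp at hj'; omega))
      have e2 : ∑ j ∈ Finset.range (n+1), F j = ∑ j ∈ Finset.range (k+n+1), F j :=
        Finset.sum_subset (Finset.range_subset_range.2 (by omega))
          (fun j _ hj' => hFz2 j (by simp at hj'; omega))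
      rw [e1, e2]
    have h4 : ∑ j ∈ Finset.range (n+1), F j = ∑ a ∈ Finset.range n, F (a+1) := by
      rw [Finset.sum_range_succ']
      have hF0 : F 0 = 0 := by simp [hF]
      rw [hF0, add_zero]
    have h5 : ∑ a ∈ Finset.range n, F (a+1)
        = (d:ℚ)/(d*n) * (∑ a ∈ Finset.range n,
            (k.choose (a+1) * (a+1) * ((d*n).choose (n-1-a)) : ℕ)) := by
      rw [Nat.cast_sum, Finset.mul_sum]
      refine Finset.sum_congr rfl fun a ha => ?_
      have ha' : a < n := Finset.mem_range.mp ha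
      have hsub : n - (a+1) = n-1-a := by omega
      simp only [hF]
      rw [if_pos (show 1 ≤ a+1 ∧ a+1 ≤ n by omega), hsub]
      push_cast
      ring
    have h6 : (∑ a ∈ Finset.range n,
            (k.choose (a+1) * (a+1) * ((d*n).choose (n-1-a)) : ℕ))
        = k * ((k-1)+d*n).choose (n-1) := by
      have := natsum k (d*n) (n-1) hk
      rwa [Nat.sub_add_cancel hn] at this
    have hnat : (d*n+k) * ((k-1)+d*n).choose (n-1) = (d*n+k).choose n * n := by
      have h := Nat.add_one_mul_choose_eq ((k-1)+d*n) (n-1)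
      have e1 : ((k-1)+d*n) + 1 = d*n+k := by omega
      have e2 : (n-1) + 1 = n := by omega
      rw [e1, e2] at h
      exact h
    rw [h2, h3, h4, h5, h6]
    have hnatQ : ((d*n+k : ℕ) : ℚ) * (((k-1)+d*n).choose (n-1) : ℚ)
        = ((d*n+k).choose n : ℚ) * n := by exact_mod_cast congrArg (Nat.cast : ℕ → ℚ) hnat
    have hdnk0 : ((d:ℚ)*n+k) ≠ 0 := by
      have h1 : (0:ℚ) ≤ (d:ℚ)*n := by positivity
      have h2 : (0:ℚ) < k := by exact_mod_cast hk
      linarith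
    push_cast at hnatQ ⊢
    rw [div_mul_eq_mul_div, div_eq_div_iff hdn0 hdnk0]
    linear_combination (d:ℚ) * k * hnatQ

/-- For an integer `d ≥ 2`, if `g ∈ ℚ[[x]]` satisfies `g = 1 + x·g^d`
(the equation determining `g` uniquely), then the coefficient of `x^n` in `g` equals
`binom(dn, n)/((d−1)n+1)`, the number of `d`-dissections of a strictly convex polygon
with `(d−1)n+2` vertices. -/
theorem stmt14 (d : ℕ) (hd : 2 ≤ d) (g : ℚ⟦X⟧)
    (hg : g = 1 + PowerSeries.X * g ^ d) (n : ℕ) :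
    PowerSeries.coeff n g = ((d * n).choose n : ℚ) / (((d : ℚ) - 1) * n + 1) := by
  have h := keylemma d hd g hg n 1 le_rfl
  rw [pow_one] at h
  rw [h]
  have hle : n ≤ d*n := Nat.le_mul_of_pos_left n (by omega)
  have hdsub : (d-1)*n = d*n - n := by rw [Nat.sub_mul, one_mul]
  have hnat : ((d-1)*n+1) * (d*n+1).choose n = (d*n+1) * (d*n).choose n := by
    have h1 : (d*n+1).choose n = (d*n+1).choose ((d-1)*n+1) := by
      rw [← Nat.choose_symm (by omega : n ≤ d*n+1)]
      congr 1
      omega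
    have h3 : (d*n).choose ((d-1)*n) = (d*n).choose n := by
      rw [hdsub]; exact Nat.choose_symm hle
    have h2 := Nat.add_one_mul_choose_eq (d*n) ((d-1)*n)
    rw [h1, ← h3]
    exact (mul_comm _ _).trans h2.symm
  have hnatQ : (((d-1)*n+1 : ℕ) : ℚ) * ((d*n+1).choose n : ℚ)
      = ((d*n+1 : ℕ) : ℚ) * ((d*n).choose n : ℚ) := by exact_mod_cast congrArg (Nat.cast : ℕ → ℚ) hnat
  have hd1 : (1:ℕ) ≤ d := by omega
  rw [Nat.cast_add, Nat.cast_mul, Nat.cast_sub hd1] at hnatQ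
  push_cast at hnatQ ⊢
  have hp1 : ((d:ℚ)*n+1) ≠ 0 := by positivity
  have hp2 : (((d:ℚ)-1)*n+1) ≠ 0 := by
    have h2 : (2:ℚ) ≤ d := by exact_mod_cast hd
    have : (0:ℚ) ≤ ((d:ℚ)-1)*n := mul_nonneg (by linarith) (Nat.cast_nonneg n)
    linarith
  rw [div_eq_div_iff hp1 hp2]
  linear_combination hnatQ
end

section
/- Let d ≥ 2 be an integer and let W_d = ∑_{n≥0} w_{d,n} x^n ∈ (ℚ[t,t⁻¹])[[x]]. Then W_d satisfies the algebraic equation W_d = 1 + t·x·(1 + t⁻¹·x·W_d^d)^d. -/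
open LaurentPolynomial PowerSeries

lemma coeff_pow_tuple {R : Type*} [CommSemiring R] (d n : ℕ) (φ : R⟦X⟧) :
    PowerSeries.coeff n (φ ^ d) =
      ∑ k ∈ Finset.Nat.antidiagonalTuple d n, ∏ i : Fin d, PowerSeries.coeff (k i) φ := by
  have h : φ ^ d = ∏ i ∈ (Finset.univ : Finset (Fin d)), φ := by simp
  rw [h, PowerSeries.coeff_prod]
  refine Finset.sum_nbij' (fun f => (f : Fin d → ℕ)) (fun k => Finsupp.equivFunOnFinite.symm k)
    ?_ ?_ ?_ ?_ ?_
  · intro f hf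
    simp only [Finset.mem_finsuppAntidiag] at hf
    simp [Finset.Nat.mem_antidiagonalTuple, ← hf.1, Finset.sum_apply']
  · intro k hk
    simp only [Finset.Nat.mem_antidiagonalTuple] at hk
    simp only [Finset.mem_finsuppAntidiag]
    refine ⟨?_, Finset.subset_univ _⟩
    rw [← hk]
    exact Finset.sum_congr rfl (fun i _ => rfl)
  · intro f _; ext i; simp
  · intro k _; ext i; simp
  · intro f _; rfl

/-- For `d ≥ 2` and the Laurent polynomials `w_{d,n}` defined by
`w_{d,0} = 1` and `w_{d,n+1}(t) = t·∑_{k₁+⋯+k_d = n} ∏ᵢ w_{d,kᵢ}(t⁻¹)`, the generating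
series `W_d = ∑ w_{d,n} x^n` satisfies `W_d = 1 + t·x·(1 + t⁻¹·x·W_d^d)^d`. -/
theorem stmt15 (d : ℕ) (hd : 2 ≤ d) (w : ℕ → ℚ[T;T⁻¹])
    (hw0 : w 0 = 1)
    (hw : ∀ n : ℕ, w (n + 1) =
      T 1 * ∑ k ∈ Finset.Nat.antidiagonalTuple d n, ∏ i : Fin d, invert (w (k i)))
    (W : (ℚ[T;T⁻¹])⟦X⟧) (hW : W = PowerSeries.mk fun n => w n) :
    W = 1 + PowerSeries.C (T 1) * PowerSeries.X
      * (1 + PowerSeries.C (T (-1)) * PowerSeries.X * W ^ d) ^ d := by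
  set V : (ℚ[T;T⁻¹])⟦X⟧ := PowerSeries.mk (fun n => invert (w n)) with hV
  have key : ∀ (a : ℚ[T;T⁻¹]) (ψ : (ℚ[T;T⁻¹])⟦X⟧) (n : ℕ),
      (PowerSeries.coeff (n + 1)) (PowerSeries.C a * PowerSeries.X * ψ) =
        a * PowerSeries.coeff n ψ := by
    intro a ψ n
    rw [mul_assoc, ← PowerSeries.smul_eq_C_mul, map_smul, PowerSeries.coeff_succ_X_mul,
      smul_eq_mul]
  have stepA : W = 1 + PowerSeries.C (T 1) * PowerSeries.X * V ^ d := by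
    ext n
    cases n with
    | zero =>
      simp [hW, hw0, key]
    | succ n =>
      rw [hW, PowerSeries.coeff_mk, map_add, key, PowerSeries.coeff_one, if_neg (by omega),
        zero_add, coeff_pow_tuple, hw n]
      simp [hV]
  have stepB : V = 1 + PowerSeries.C (T (-1)) * PowerSeries.X * W ^ d := by
    ext n
    cases n with
    | zero =>
      simp [hV, hw0, key]
    | succ n =>
      rw [hV, PowerSeries.coeff_mk, map_add, key, PowerSeries.coeff_one, if_neg (by omega),
        zero_add, coeff_pow_tuple, hw n]
      rw [map_mul, invert_T]
      simp only [map_sum, map_prod]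
      apply congrArg (fun p : ℚ[T;T⁻¹] => p.coeff _)
      apply congrArg (fun x : ℚ[T;T⁻¹] => T (-1) * x)
      apply Finset.sum_congr rfl
      intro k _
      apply Finset.prod_congr rfl
      intro i _
      rw [involutive_invert (w (k i)), hW, PowerSeries.coeff_mk]
  rw [← stepB]
  exact stepA
end
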